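/- arXiv:2004.00788 — 5 statements merged into one kernel-verified Lean document; each statement's English description precedes it below -/
import Mathlib

section
/- There is a containment of ideals I_{n,λ,s} ⊆ T(X_{n,λ,s}), i.e. every generator x_i^s and every generator e_d(S) with d > |S| − p^n_{|S|}(λ) lies in the ideal generated by the top-degree homogeneous components of polynomials vanishing on X_{n,λ,s}. -/
open MvPolynomial

/-- `j`-th entry (1-indexed) of the conjugate partition of the partition `L`. -/
def conjList (L : List ℕ) (j : ℕ) : ℕ := (L.filter fun x => j ≤ x).length

/-- `p^N_m(λ) = λ'_N + λ'_{N-1} + ⋯ + λ'_{N-m+1}`, the conjugate being padded by zeros. -/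
def pcal (L : List ℕ) (N m : ℕ) : ℕ := ∑ i ∈ Finset.Icc (N - m + 1) N, conjList L i

/-- Elementary symmetric polynomial `e_d(S)` in the set of variables `S`. -/
noncomputable def esymF {n : ℕ} (S : Finset (Fin n)) (d : ℕ) : MvPolynomial (Fin n) ℚ :=
  ∑ T ∈ S.powersetCard d, ∏ i ∈ T, X i

/-- The ideal `I_{n,λ,s}`, generated by the `x_i^s` and the partial elementary symmetric
polynomials `e_d(S)` for `d > |S| - p^n_{|S|}(λ)`. -/
noncomputable def IdealI (n s : ℕ) (L : List ℕ) : Ideal (MvPolynomial (Fin n) ℚ) :=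
  Ideal.span ((Set.range fun i : Fin n => (X i : MvPolynomial (Fin n) ℚ) ^ s) ∪
    {p | ∃ (S : Finset (Fin n)) (d : ℕ), S.card - pcal L n S.card < d ∧ p = esymF S d})

/-- `L` is a partition of `k` with at most `s` parts. -/
def IsPartitionOf (k s : ℕ) (L : List ℕ) : Prop :=
  L.Pairwise (· ≥ ·) ∧ (∀ x ∈ L, 0 < x) ∧ L.sum = k ∧ L.length ≤ s

/-- The monomial `x^α`. -/
noncomputable def monoOf {n : ℕ} (al : Fin n → ℕ) : MvPolynomial (Fin n) ℚ :=
  monomial (Finsupp.equivFunOnFinite.symm al) 1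

/-- The point set `X_{n,λ,s}` attached to the distinct values `a 0, …, a (s-1)`:
every coordinate is some `a j`, and `a j` occurs at least `λ_{j+1}` times. -/
def Xset (n s : ℕ) (L : List ℕ) (a : Fin s → ℚ) : Set (Fin n → ℚ) :=
  {p | (∀ i : Fin n, ∃ j : Fin s, p i = a j) ∧
    ∀ j : Fin s, L.getD (j : ℕ) 0 ≤ Nat.card {i : Fin n // p i = a j}}

/-- The vanishing ideal `I(Y)` of a set of points `Y ⊆ ℚⁿ`. -/
noncomputable def vanishingIdealOf (n : ℕ) (Y : Set (Fin n → ℚ)) :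
    Ideal (MvPolynomial (Fin n) ℚ) where
  carrier := {f | ∀ p ∈ Y, eval p f = 0}
  zero_mem' := by intro p hp; simp
  add_mem' := by intro f g hf hg p hp; simp [hf p hp, hg p hp]
  smul_mem' := by intro c f hf p hp; simp [smul_eq_mul, hf p hp]

/-- Top-degree homogeneous component `τ(f)`. -/
noncomputable def tauTop {n : ℕ} (f : MvPolynomial (Fin n) ℚ) : MvPolynomial (Fin n) ℚ :=
  homogeneousComponent f.totalDegree f

/-- The associated graded ideal `T(Y) = ⟨τ(f) : f ∈ I(Y), f ≠ 0⟩`. -/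
noncomputable def gradedIdealOf (n : ℕ) (Y : Set (Fin n → ℚ)) :
    Ideal (MvPolynomial (Fin n) ℚ) :=
  Ideal.span {g | ∃ f ∈ vanishingIdealOf n Y, f ≠ 0 ∧ g = tauTop f}


lemma conjList_eq (L : List ℕ) (i : ℕ) (hi : 0 < i) :
    ∀ s, L.length ≤ s →
      conjList L i = ∑ j ∈ Finset.range s, if i ≤ L.getD j 0 then 1 else 0 := by
  induction L with
  | nil =>
    intro s _
    simp only [conjList, List.filter_nil, List.length_nil]
    rw [Finset.sum_eq_zero]
    intro j _
    simp only [List.getD_nil]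
    simp
    omega
  | cons x L ih =>
    intro s hls
    cases s with
    | zero => simp at hls
    | succ s =>
      rw [Finset.sum_range_succ']
      simp only [List.getD_cons_succ, List.getD_cons_zero]
      rw [← ih s (by simpa using hls)]
      by_cases h : i ≤ x <;>
        simp [conjList, List.filter_cons, h, add_comm]

lemma pcal_le {n m s : ℕ} (L : List ℕ) (hLs : L.length ≤ s) :
    pcal L n m ≤ ∑ j : Fin s, (L.getD (j : ℕ) 0 - (n - m)) := by
  rw [show (∑ j : Fin s, (L.getD (j : ℕ) 0 - (n - m))) = ∑ j ∈ Finset.range s,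
    (L.getD j 0 - (n - m)) from Fin.sum_univ_eq_sum_range (fun j => L.getD j 0 - (n - m)) s]
  unfold pcal
  have h1 : ∀ i ∈ Finset.Icc (n - m + 1) n,
      conjList L i = ∑ j ∈ Finset.range s, if i ≤ L.getD j 0 then 1 else 0 := by
    intro i hi
    rw [Finset.mem_Icc] at hi
    exact conjList_eq L i (by omega) s hLs
  rw [Finset.sum_congr rfl h1, Finset.sum_comm]
  apply Finset.sum_le_sum
  intro j _
  rw [← Finset.card_filter]
  calc ((Finset.Icc (n - m + 1) n).filter fun i => i ≤ L.getD j 0).card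
      ≤ (Finset.Icc (n - m + 1) (L.getD j 0)).card := by
        apply Finset.card_le_card
        intro i hi
        simp only [Finset.mem_filter, Finset.mem_Icc] at hi ⊢
        omega
    _ ≤ L.getD j 0 - (n - m) := by rw [Nat.card_Icc]; omega

lemma esymF_isHomogeneous {n : ℕ} (S : Finset (Fin n)) (d : ℕ) :
    (esymF S d).IsHomogeneous d := by
  apply MvPolynomial.IsHomogeneous.sum
  intro T hT
  have hc := (Finset.mem_powersetCard.mp hT).2
  have h : (∏ i ∈ T, (X i : MvPolynomial (Fin n) ℚ)).IsHomogeneous (∑ _i ∈ T, 1) :=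
    MvPolynomial.IsHomogeneous.prod _ _ _ fun i _ => isHomogeneous_X _ _
  simpa [Finset.sum_const, hc] using h

lemma esymF_totalDegree_le {n : ℕ} (S : Finset (Fin n)) (d : ℕ) :
    (esymF S d).totalDegree ≤ d :=
  (esymF_isHomogeneous S d).totalDegree_le

lemma esymF_ne_zero {n : ℕ} {S : Finset (Fin n)} {d : ℕ} (h : d ≤ S.card) :
    esymF S d ≠ 0 := by
  intro h0
  have h1 := congrArg (eval fun _ => (1 : ℚ)) h0
  simp only [esymF, map_sum, map_zero, eval_prod, eval_X, Finset.prod_const_one,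
    Finset.sum_const, nsmul_eq_mul, mul_one, Finset.card_powersetCard] at h1
  have := Nat.choose_pos h
  exact_mod_cast absurd h1 (by positivity)

lemma tau_spec {n d : ℕ} {f g : MvPolynomial (Fin n) ℚ}
    (hcomp : homogeneousComponent d f = g) (hg0 : g ≠ 0)
    (hle : f.totalDegree ≤ d) : f ≠ 0 ∧ f.totalDegree = d ∧ tauTop f = g := by
  have hlt : ¬ f.totalDegree < d := by
    intro h
    exact hg0 (hcomp ▸ (homogeneousComponent_eq_zero d f h))
  have hdeg : f.totalDegree = d := le_antisymm hle (not_lt.mp hlt)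
  refine ⟨?_, hdeg, by rw [tauTop, hdeg, hcomp]⟩
  rintro rfl
  apply hg0
  rw [← hcomp, map_zero]

lemma eval_esymF {n : ℕ} (S : Finset (Fin n)) (d : ℕ) (p : Fin n → ℚ) :
    eval p (esymF S d) =
      (∏ i ∈ S, (Polynomial.C (p i) * Polynomial.X + 1)).coeff d := by
  rw [Finset.prod_add]
  simp only [Finset.prod_const_one, mul_one, Polynomial.finset_sum_coeff]
  have key : ∀ t : Finset (Fin n),
      (∏ i ∈ t, (Polynomial.C (p i) * Polynomial.X)).coeff d
        = if t.card = d then ∏ i ∈ t, p i else 0 := by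
    intro t
    rw [Finset.prod_mul_distrib, Finset.prod_const,
      ← map_prod (Polynomial.C : ℚ →+* Polynomial ℚ) p t,
      Polynomial.coeff_C_mul, Polynomial.coeff_X_pow]
    by_cases h : t.card = d
    · simp [h]
    · have h' : ¬ d = t.card := fun hh => h hh.symm
      simp only [if_neg h, if_neg h', mul_zero]
  rw [Finset.sum_congr rfl fun t _ => key t, Finset.sum_ite, Finset.sum_const_zero, add_zero]
  rw [esymF, map_sum, Finset.powersetCard_eq_filter]
  apply Finset.sum_congr rfl
  intro T _
  simp

lemma mem_graded {n : ℕ} {Y : Set (Fin n → ℚ)} {g f : MvPolynomial (Fin n) ℚ}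
    (hf : ∀ p ∈ Y, eval p f = 0) (hf0 : f ≠ 0) (htau : tauTop f = g) :
    g ∈ gradedIdealOf n Y :=
  Ideal.subset_span ⟨f, hf, hf0, htau.symm⟩

lemma xpow_mem {n s : ℕ} (L : List ℕ) (a : Fin s → ℚ) (i : Fin n) :
    (X i : MvPolynomial (Fin n) ℚ) ^ s ∈ gradedIdealOf n (Xset n s L a) := by
  classical
  set f : MvPolynomial (Fin n) ℚ := ∏ j : Fin s, (X i - C (a j)) with hf
  have hexp : f = ∑ t ∈ (Finset.univ : Finset (Fin s)).powerset,
      (X i : MvPolynomial (Fin n) ℚ) ^ t.card * ∏ j ∈ Finset.univ \ t, (- C (a j)) := by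
    rw [hf]
    have h1 : ∀ j : Fin s, (X i : MvPolynomial (Fin n) ℚ) - C (a j) = X i + (- C (a j)) := by
      intro j; ring
    rw [Finset.prod_congr rfl fun j _ => h1 j, Finset.prod_add]
    exact Finset.sum_congr rfl fun t _ => by rw [Finset.prod_const]
  have hCprod : ∀ t : Finset (Fin s),
      (∏ j ∈ Finset.univ \ t, (- C (a j) : MvPolynomial (Fin n) ℚ)) =
        C (∏ j ∈ Finset.univ \ t, (- a j)) := by
    intro t
    simp only [← map_neg (C : ℚ →+* MvPolynomial (Fin n) ℚ)]
    rw [← map_prod (C : ℚ →+* MvPolynomial (Fin n) ℚ)]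
  have hterm_deg : ∀ t : Finset (Fin s),
      ((X i : MvPolynomial (Fin n) ℚ) ^ t.card *
        ∏ j ∈ Finset.univ \ t, (- C (a j))).totalDegree ≤ t.card := by
    intro t
    rw [hCprod t]
    calc _ ≤ ((X i : MvPolynomial (Fin n) ℚ) ^ t.card).totalDegree
          + (C (∏ j ∈ Finset.univ \ t, (- a j)) : MvPolynomial (Fin n) ℚ).totalDegree :=
        totalDegree_mul _ _
      _ ≤ t.card := by rw [totalDegree_X_pow, totalDegree_C, add_zero]
  have hle : f.totalDegree ≤ s := by
    rw [hexp]
    refine le_trans (totalDegree_finset_sum _ _) (Finset.sup_le fun t ht => ?_)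
    exact le_trans (hterm_deg t) (by simpa using Finset.card_le_card (Finset.mem_powerset.mp ht))
  have hcomp : homogeneousComponent s f = (X i : MvPolynomial (Fin n) ℚ) ^ s := by
    rw [hexp, ← Finset.add_sum_erase ((Finset.univ : Finset (Fin s)).powerset)
      (fun t => (X i : MvPolynomial (Fin n) ℚ) ^ t.card * ∏ j ∈ Finset.univ \ t, (- C (a j)))
      (Finset.mem_powerset_self (Finset.univ : Finset (Fin s))), map_add, map_sum]
    have h2 : homogeneousComponent s
        ((X i : MvPolynomial (Fin n) ℚ) ^ (Finset.univ : Finset (Fin s)).card *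
        ∏ j ∈ (Finset.univ : Finset (Fin s)) \ Finset.univ, (- C (a j)))
          = (X i : MvPolynomial (Fin n) ℚ) ^ s := by
      rw [Finset.sdiff_self, Finset.prod_empty, mul_one, Finset.card_univ, Fintype.card_fin]
      have hh : ((X i : MvPolynomial (Fin n) ℚ) ^ s).IsHomogeneous s := by
        simpa using (isHomogeneous_X ℚ i).pow s
      rw [homogeneousComponent_of_mem ((mem_homogeneousSubmodule _ _).mpr hh), if_pos rfl]
    rw [h2]
    have h3 : ∀ t ∈ (Finset.univ : Finset (Fin s)).powerset.erase Finset.univ,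
        homogeneousComponent s ((X i : MvPolynomial (Fin n) ℚ) ^ t.card *
          ∏ j ∈ Finset.univ \ t, (- C (a j))) = 0 := by
      intro t ht
      apply homogeneousComponent_eq_zero
      refine lt_of_le_of_lt (hterm_deg t) ?_
      have h4 : t ≠ Finset.univ := (Finset.mem_erase.mp ht).1
      have h5 : t.card ≤ s := by simpa using Finset.card_le_card (t.subset_univ)
      rcases lt_or_eq_of_le h5 with h | h
      · exact h
      · exact absurd ((Finset.card_eq_iff_eq_univ t).mp (by simpa using h)) h4
    rw [Finset.sum_eq_zero h3, add_zero]
  obtain ⟨hf0, _, htau⟩ := tau_spec hcomp (pow_ne_zero s (X_ne_zero i)) hle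
  apply mem_graded _ hf0 htau
  intro p hp
  obtain ⟨j, hj⟩ := hp.1 i
  rw [hf, map_prod]
  exact Finset.prod_eq_zero (Finset.mem_univ j) (by simp [hj])

lemma esym_mem {n s : ℕ} (L : List ℕ) (hLs : L.length ≤ s)
    (a : Fin s → ℚ) (ha : Function.Injective a)
    (S : Finset (Fin n)) (d : ℕ) (hd : S.card - pcal L n S.card < d) :
    esymF S d ∈ gradedIdealOf n (Xset n s L a) := by
  classical
  by_cases hdS : S.card < d
  · rw [esymF, Finset.powersetCard_eq_empty.mpr hdS, Finset.sum_empty]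
    exact Ideal.zero_mem _
  push_neg at hdS
  have hd0 : 0 < d := by omega
  set m := S.card with hm
  set c : Fin s → ℕ := fun j => L.getD (j : ℕ) 0 - (n - m) with hc
  set Q : Polynomial ℚ := ∏ j : Fin s, (Polynomial.C (a j) * Polynomial.X + 1) ^ c j with hQ
  set G : PowerSeries ℚ := (↑Q : PowerSeries ℚ)⁻¹ with hG
  set g : ℕ → ℚ := fun j => PowerSeries.coeff j G with hg
  set f : MvPolynomial (Fin n) ℚ :=
    ∑ j ∈ Finset.range (d + 1), C (g j) * esymF S (d - j) with hfdef
  have hconstQ : PowerSeries.constantCoeff (↑Q : PowerSeries ℚ) = 1 := by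
    rw [← PowerSeries.coeff_zero_eq_constantCoeff_apply, Polynomial.coeff_coe,
      Polynomial.coeff_zero_eq_eval_zero]
    simp [hQ, Polynomial.eval_prod]
  have hg0 : g 0 = 1 := by
    rw [hg]
    show PowerSeries.coeff 0 G = 1
    rw [PowerSeries.coeff_zero_eq_constantCoeff_apply, hG, PowerSeries.constantCoeff_inv,
      hconstQ, inv_one]
  have hGQ : G * (↑Q : PowerSeries ℚ) = 1 :=
    PowerSeries.inv_mul_cancel _ (by rw [hconstQ]; exact one_ne_zero)
  have hcomp : homogeneousComponent d f = esymF S d := by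
    rw [hfdef, map_sum, Finset.sum_range_succ']
    have h1 : ∀ j ∈ Finset.range d,
        homogeneousComponent d (C (g (j + 1)) * esymF S (d - (j + 1))) = 0 := by
      intro j hj
      apply homogeneousComponent_eq_zero
      calc (C (g (j + 1)) * esymF S (d - (j + 1))).totalDegree
          ≤ _ + _ := totalDegree_mul _ _
        _ ≤ 0 + (d - (j + 1)) :=
          add_le_add (le_of_eq (totalDegree_C _)) (esymF_totalDegree_le _ _)
        _ < d := by omega
    rw [Finset.sum_eq_zero h1, zero_add, Nat.sub_zero, hg0, map_one, one_mul]
    rw [homogeneousComponent_of_mem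
      ((mem_homogeneousSubmodule _ _).mpr (esymF_isHomogeneous S d)), if_pos rfl]
  have hle : f.totalDegree ≤ d := by
    rw [hfdef]
    refine le_trans (totalDegree_finset_sum _ _) (Finset.sup_le fun j hj => ?_)
    calc (C (g j) * esymF S (d - j)).totalDegree
        ≤ _ + _ := totalDegree_mul _ _
      _ ≤ 0 + (d - j) := add_le_add (le_of_eq (totalDegree_C _)) (esymF_totalDegree_le _ _)
      _ ≤ d := by omega
  obtain ⟨hf0, _, htau⟩ := tau_spec hcomp (esymF_ne_zero hdS) hle
  apply mem_graded _ hf0 htau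
  intro p hp
  obtain ⟨hp1, hp2⟩ := hp
  have hcount : ∀ j : Fin s, c j ≤ (S.filter fun i => p i = a j).card := by
    intro j
    have h1 : L.getD (j : ℕ) 0 ≤ (Finset.univ.filter fun i : Fin n => p i = a j).card := by
      have h0 := hp2 j
      rwa [Nat.card_eq_fintype_card, Fintype.card_subtype] at h0
    have h2 : (Finset.univ.filter fun i : Fin n => p i = a j).card
        ≤ (S.filter fun i => p i = a j).card + (n - m) := by
      have hsub : (Finset.univ.filter fun i : Fin n => p i = a j)
          ⊆ (S.filter fun i => p i = a j) ∪ Sᶜ := by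
        intro i hi
        rw [Finset.mem_filter] at hi
        by_cases hiS : i ∈ S
        · exact Finset.mem_union_left _ (Finset.mem_filter.mpr ⟨hiS, hi.2⟩)
        · exact Finset.mem_union_right _ (Finset.mem_compl.mpr hiS)
      calc _ ≤ _ := Finset.card_le_card hsub
        _ ≤ (S.filter fun i => p i = a j).card + Sᶜ.card := Finset.card_union_le _ _
        _ = _ := by rw [Finset.card_compl, Fintype.card_fin, hm]
    show L.getD (j : ℕ) 0 - (n - m) ≤ (S.filter fun i => p i = a j).card
    omega
  choose T hT1 hT2 using fun j => Finset.exists_subset_card_eq (hcount j)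
  have hTS : ∀ j, T j ⊆ S := fun j => (hT1 j).trans (Finset.filter_subset _ _)
  have hTp : ∀ j, ∀ i ∈ T j, p i = a j := fun j i hi => (Finset.mem_filter.mp (hT1 j hi)).2
  have hdisj : ∀ x ∈ (Finset.univ : Finset (Fin s)), ∀ y ∈ Finset.univ, x ≠ y →
      Disjoint (T x) (T y) := by
    intro x _ y _ hxy
    rw [Finset.disjoint_left]
    intro i hx hy
    exact hxy (ha ((hTp x i hx).symm.trans (hTp y i hy)))
  set U : Finset (Fin n) := Finset.univ.biUnion T with hU
  have hUS : U ⊆ S := Finset.biUnion_subset.mpr fun j _ => hTS j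
  have hUcard : U.card = ∑ j : Fin s, c j := by
    rw [hU, Finset.card_biUnion hdisj]
    exact Finset.sum_congr rfl fun j _ => hT2 j
  set EP : Polynomial ℚ := ∏ i ∈ S, (Polynomial.C (p i) * Polynomial.X + 1) with hEP
  set RP : Polynomial ℚ := ∏ i ∈ S \ U, (Polynomial.C (p i) * Polynomial.X + 1) with hRP
  have hQU : (∏ i ∈ U, (Polynomial.C (p i) * Polynomial.X + 1)) = Q := by
    rw [hU, Finset.prod_biUnion
      (fun x _ y _ hxy => hdisj x (Finset.mem_univ x) y (Finset.mem_univ y) hxy), hQ]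
    apply Finset.prod_congr rfl
    intro j _
    rw [Finset.prod_congr rfl (fun i hi => by rw [hTp j i hi]), Finset.prod_const, hT2 j]
  have hfact : EP = Q * RP := by
    rw [hEP, ← Finset.prod_sdiff hUS, hQU, ← hRP, mul_comm]
  have heval : eval p f = RP.coeff d := by
    rw [hfdef, map_sum]
    have h1 : ∀ j ∈ Finset.range (d + 1),
        eval p (C (g j) * esymF S (d - j)) = g j * EP.coeff (d - j) := by
      intro j _
      rw [map_mul, eval_C, eval_esymF]
    rw [Finset.sum_congr rfl h1]
    have h2 : ∑ j ∈ Finset.range (d + 1), g j * EP.coeff (d - j)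
        = PowerSeries.coeff d (G * (↑EP : PowerSeries ℚ)) := by
      rw [PowerSeries.coeff_mul, Finset.Nat.sum_antidiagonal_eq_sum_range_succ_mk]
      exact Finset.sum_congr rfl fun k _ => by rw [Polynomial.coeff_coe]
    have h3 : G * (↑EP : PowerSeries ℚ) = (↑RP : PowerSeries ℚ) := by
      rw [hfact, Polynomial.coe_mul, ← mul_assoc, hGQ, one_mul]
    rw [h2, h3, Polynomial.coeff_coe]
  have hRdeg : RP.natDegree ≤ (S \ U).card := by
    refine le_trans (Polynomial.natDegree_prod_le _ _) ?_
    have hdeg1 : ∀ i ∈ S \ U, (Polynomial.C (p i) * Polynomial.X + 1).natDegree ≤ 1 := by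
      intro i _
      simpa using (Polynomial.natDegree_linear_le (a := p i) (b := (1 : ℚ)))
    calc ∑ i ∈ S \ U, (Polynomial.C (p i) * Polynomial.X + 1).natDegree
        ≤ ∑ _i ∈ S \ U, 1 := Finset.sum_le_sum (f := fun i => (Polynomial.C (p i) * Polynomial.X + 1).natDegree) (g := fun _ => 1) hdeg1
      _ = (S \ U).card := by simp
  have h4 : pcal L n m ≤ ∑ j : Fin s, c j := pcal_le L hLs
  have h5 : (S \ U).card = m - U.card := by rw [Finset.card_sdiff_of_subset hUS, hm]
  have hcard : (S \ U).card < d := by omega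
  rw [heval]
  exact Polynomial.coeff_eq_zero_of_natDegree_lt (lt_of_le_of_lt hRdeg hcard)

/-- `I_{n,λ,s} ⊆ T(X_{n,λ,s})`. -/
theorem stmt1 (n k s : ℕ) (hk : 0 < k) (hs : 0 < s) (hkn : k ≤ n)
    (L : List ℕ) (hL : IsPartitionOf k s L)
    (a : Fin s → ℚ) (ha : Function.Injective a) :
    IdealI n s L ≤ gradedIdealOf n (Xset n s L a) := by
  obtain ⟨-, -, -, hLs⟩ := hL
  rw [IdealI, Ideal.span_le]
  rintro q hq
  rcases hq with ⟨i, rfl⟩ | ⟨S, d, hd, rfl⟩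
  · exact xpow_mem L a i
  · exact esym_mem L hLs a ha S d hd
end

section
/- Let 1 ≤ a ≤ b be integers and n = a + b. For every shuffle γ of the sequences (0,1,…,a−1) and (0,1,…,b−1), there exists a shuffle δ of (0,1,…,a−1) and (0,1,…,b−1) such that δ_n = a−1 and γ_i ≤ δ_i for all 1 ≤ i ≤ n−1. -/
open MvPolynomial

/-- `w` is a shuffle of the list of lists `Ls`: the positions of `w` are partitioned
into blocks, one per list of `Ls`, with each list occupying its block in order. -/
def IsShuffle {α : Type*} (Ls : List (List α)) (w : List α) : Prop :=
  ∃ g : Fin w.length → Fin Ls.length,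
    ∀ j : Fin Ls.length,
      ((List.finRange w.length).filter fun i => decide (g i = j)).map w.get = Ls.get j

namespace Stmt6Aux

lemma countP_not {α : Type*} (p : α → Bool) (l : List α) :
    l.countP p + l.countP (fun x => !p x) = l.length := by
  induction l with
  | nil => rfl
  | cons x t ih =>
    simp only [List.countP_cons, List.length_cons]
    cases h : p x <;> simp [h] <;> omega

/-- Convert a filter-length over `finRange` to a `countP` over `range`. -/
lemma filter_finRange_length {m : ℕ} (p : Fin m → Bool) (q : ℕ → Bool)
    (h : ∀ i : Fin m, q i.val = p i) :
    ((List.finRange m).filter p).length = (List.range m).countP q := by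
  have hmap : (List.finRange m).map Fin.val = List.range m :=
    List.ext_getElem (by simp) (by simp)
  rw [← hmap, List.countP_map, ← List.countP_eq_length_filter]
  exact List.countP_congr (fun x _ => by simp [Function.comp, h x])

lemma filter_range_lt (k m : ℕ) (hk : k ≤ m) :
    (List.range m).filter (fun x => decide (x < k)) = List.range k := by
  induction m with
  | zero => simp [Nat.le_zero.mp hk]
  | succ m ih =>
    rcases Nat.lt_or_ge k (m+1) with h1 | h2
    · have hkm : k ≤ m := by omega
      rw [List.range_succ, List.filter_append, ih hkm]
      have : ¬ m < k := by omega
      simp [this]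
    · have : k = m + 1 := by omega
      subst this
      rw [List.filter_eq_self.mpr]
      intro x hx
      simp only [List.mem_range] at hx
      simpa using hx

lemma countP_range_lt (q : ℕ → Bool) (k m : ℕ) (hk : k ≤ m) :
    (List.range m).countP (fun x => decide (x < k) && q x) = (List.range k).countP q := by
  have h := List.countP_filter (p := q) (q := fun x => decide (x < k)) (l := List.range m)
  rw [filter_range_lt k m hk] at h
  rw [h]
  exact List.countP_congr (fun x _ => by simp [Bool.and_comm])

lemma countP_range_succ (q : ℕ → Bool) (i : ℕ) :
    (List.range (i+1)).countP q = (List.range i).countP q + if q i then 1 else 0 := by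
  rw [List.range_succ, List.countP_append, List.countP_singleton]

/-- In a sorted list, mapping each element to the number of smaller elements of the
list gives `range`. -/
lemma sorted_map_count {m : ℕ} :
    ∀ (l : List (Fin m)), l.Pairwise (· < ·) →
      ∀ (c : Fin m → ℕ), (∀ i ∈ l, c i = (l.filter (fun j => decide (j.val < i.val))).length) →
      l.map c = List.range l.length := by
  intro l
  induction l with
  | nil => intro _ c _; rfl
  | cons x t ih =>
    intro hp c hc
    have hxt := (List.pairwise_cons.mp hp).1
    have hpt := (List.pairwise_cons.mp hp).2
    have hcx : c x = 0 := by
      rw [hc x List.mem_cons_self]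
      have hnil : (x :: t).filter (fun j => decide (j.val < x.val)) = [] := by
        apply List.filter_eq_nil_iff.mpr
        intro a ha
        rcases List.mem_cons.mp ha with rfl | ha'
        · simp
        · have := hxt a ha'
          simp only [decide_eq_true_eq]
          have : x.val < a.val := this
          omega
      rw [hnil]
      rfl
    have ht : t.map (fun y => (t.filter (fun j => decide (j.val < y.val))).length)
        = List.range t.length := ih hpt _ (fun i _ => rfl)
    have hct : ∀ y ∈ t,
        c y = (t.filter (fun j => decide (j.val < y.val))).length + 1 := by
      intro y hy
      rw [hc y (List.mem_cons_of_mem _ hy), List.filter_cons]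
      have hd : decide (x.val < y.val) = true := decide_eq_true (show x.val < y.val from hxt y hy)
      rw [if_pos hd]
      simp
    have step1 : t.map c
        = t.map (fun y => (t.filter (fun j => decide (j.val < y.val))).length + 1) :=
      List.map_congr_left hct
    have step2 : t.map (fun y => (t.filter (fun j => decide (j.val < y.val))).length + 1)
        = (t.map (fun y => (t.filter (fun j => decide (j.val < y.val))).length)).map
            (fun z => z + 1) := by
      simp [List.map_map, Function.comp]
    have step3 : (List.range t.length).map (fun z => z + 1)
        = (List.range t.length).map Nat.succ := List.map_congr_left (fun z _ => rfl)
    show c x :: t.map c = List.range (t.length + 1)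
    rw [hcx, step1, step2, ht, step3, List.range_succ_eq_map]

lemma finRange_map_cast {k m : ℕ} (h : k = m) :
    List.finRange k = (List.finRange m).map (Fin.cast h.symm) := by
  subst h
  simp [Fin.cast_refl]

/-- Mapping the word values over one block gives `range` of the block length. -/
lemma map_wv {m : ℕ} (f : Fin m → Fin 2) (j : Fin 2) :
    ((List.finRange m).filter fun x => decide (f x = j)).map
        (fun i => ((List.finRange m).filter
          fun x => decide (x.val < i.val) && decide (f x = f i)).length)
      = List.range ((List.finRange m).filter fun x => decide (f x = j)).length := by
  apply sorted_map_count _ ((List.pairwise_lt_finRange m).filter _)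
  intro i hi
  have hfi : f i = j := by
    have := (List.mem_filter.mp hi).2
    simpa using this
  simp only [List.filter_filter, hfi]

/-- The word built from an assignment `f : Fin m → Fin 2` (each position labelled by the
count of earlier positions with the same label) is a shuffle of `range a` and `range b`,
where `a` and `b` are the label counts. -/
lemma isShuffle_word {m : ℕ} (f : Fin m → Fin 2) (a b : ℕ)
    (h0 : ((List.finRange m).filter fun i => decide (f i = 0)).length = a)
    (h1 : ((List.finRange m).filter fun i => decide (f i = 1)).length = b) :
    IsShuffle [List.range a, List.range b]
      (List.ofFn fun i : Fin m =>
        ((List.finRange m).filter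
          fun x => decide (x.val < i.val) && decide (f x = f i)).length) := by
  set wv : Fin m → ℕ := fun i =>
    ((List.finRange m).filter fun x => decide (x.val < i.val) && decide (f x = f i)).length
    with hwv
  have hlen : (List.ofFn wv).length = m := List.length_ofFn (f := wv)
  refine ⟨fun i => f (Fin.cast hlen i), ?_⟩
  intro j
  have hfr : List.finRange (List.ofFn wv).length = (List.finRange m).map (Fin.cast hlen.symm) :=
    finRange_map_cast hlen
  rw [hfr, List.filter_map, List.map_map]
  have hcc : ∀ x : Fin m, Fin.cast hlen (Fin.cast hlen.symm x) = x := by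
    intro x; ext; simp
  have hpred : (List.finRange m).filter
        ((fun i => decide (f (Fin.cast hlen i) = j)) ∘ Fin.cast hlen.symm)
      = (List.finRange m).filter (fun x => decide (f x = j)) := by
    apply List.filter_congr
    intro x _
    simp [Function.comp, hcc x]
  rw [hpred]
  have hget : ∀ x ∈ (List.finRange m).filter (fun x => decide (f x = j)),
      ((List.ofFn wv).get ∘ Fin.cast hlen.symm) x = wv x := by
    intro x _
    simp [Function.comp, List.get_eq_getElem, List.getElem_ofFn]
  rw [List.map_congr_left hget]
  have hjcase : j = (0 : Fin 2) ∨ j = (1 : Fin 2) := by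
    rcases j with ⟨jv, hjv⟩
    have h2 : jv < 2 := by simpa using hjv
    interval_cases jv
    · exact Or.inl rfl
    · exact Or.inr rfl
  rcases hjcase with h | h
  · subst h
    rw [map_wv f 0, h0]
    rfl
  · subst h
    rw [map_wv f 1, h1]
    rfl

/-- The count function. -/
def sct (G : ℕ → Bool) (i : ℕ) : ℕ := (List.range i).countP G

/-- The dominating count. -/
def tmin (G : ℕ → Bool) (a i : ℕ) : ℕ := min (min (sct G i) (i - sct G i)) (a - 1)

/-- The positions of the `a`-block of the dominating shuffle. -/
def Fjump (G : ℕ → Bool) (a m i : ℕ) : Bool :=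
  if i + 1 = m then true else decide (tmin G a (i+1) = tmin G a i + 1)

lemma sct_succ (G : ℕ → Bool) (i : ℕ) :
    sct G (i+1) = sct G i + if G i then 1 else 0 := countP_range_succ G i

lemma sct_le (G : ℕ → Bool) (i : ℕ) : sct G i ≤ i := by
  have := List.countP_le_length (p := G) (l := List.range i)
  simpa [sct] using this

lemma tmin_step (G : ℕ → Bool) (a i : ℕ) :
    tmin G a (i+1) = tmin G a i ∨ tmin G a (i+1) = tmin G a i + 1 := by
  have h1 := sct_succ G i
  have h2 := sct_le G i
  have h3 := sct_le G (i+1)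
  simp only [tmin]
  split_ifs at h1 <;> omega

lemma countP_jump (G : ℕ → Bool) (a : ℕ) :
    ∀ k, (List.range k).countP (fun i => decide (tmin G a (i+1) = tmin G a i + 1))
      = tmin G a k := by
  intro k
  induction k with
  | zero => simp [tmin, sct]
  | succ k ih =>
    rw [countP_range_succ, ih]
    rcases tmin_step G a k with h | h
    · rw [if_neg (by simp; omega)]
      omega
    · rw [if_pos (by simp [h])]
      omega

lemma fin2_ne_zero (u : Fin 2) (h : u ≠ 0) : u = 1 := by
  revert u; decide

/-- The value of the word at position `i`. -/
lemma wv_eq {m : ℕ} (f : Fin m → Fin 2) (q : ℕ → Bool)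
    (hq : ∀ x : Fin m, q x.val = decide (f x = 0)) (i : Fin m) :
    ((List.finRange m).filter fun x => decide (x.val < i.val) && decide (f x = f i)).length
      = if q i.val then (List.range i.val).countP q
        else i.val - (List.range i.val).countP q := by
  by_cases h : f i = 0
  · have hqi : q i.val = true := by rw [hq i, h]; simp
    rw [if_pos hqi]
    rw [filter_finRange_length _ (fun y => decide (y < i.val) && q y)
        (fun x => by simp [hq x, h])]
    exact countP_range_lt q i.val m i.isLt.le
  · have hfi : f i = 1 := fin2_ne_zero _ h
    have hqi : q i.val = false := by rw [hq i]; simp [h]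
    rw [if_neg (by simp [hqi])]
    have hb : ∀ u : Fin 2, (!decide (u = 0)) = decide (u = 1) := by decide
    rw [filter_finRange_length _ (fun y => decide (y < i.val) && !q y)
        (fun x => by simp [hq x, hfi, hb (f x)])]
    rw [countP_range_lt (fun y => !q y) i.val m i.isLt.le]
    have hnot := countP_not q (List.range i.val)
    simp only [List.length_range] at hnot
    omega

lemma getD_ofFn {m : ℕ} (F : Fin m → ℕ) (i : ℕ) (h : i < m) :
    (List.ofFn F).getD i 0 = F ⟨i, h⟩ := by
  rw [List.getD_eq_getElem _ _ (by simpa using h)]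
  simp [List.getElem_ofFn]

end Stmt6Aux

open Stmt6Aux in
/-- If `γ` is a shuffle of `(0,…,a-1)` and `(0,…,b-1)` with
`1 ≤ a ≤ b` and `n = a + b`, then there is such a shuffle `δ` with last entry `a-1`
dominating `γ` in the first `n-1` entries. -/
theorem stmt6 (a b n : ℕ) (ha : 1 ≤ a) (hab : a ≤ b) (hn : n = a + b)
    (γ : List ℕ) (hγ : IsShuffle [List.range a, List.range b] γ) :
    ∃ δ : List ℕ, IsShuffle [List.range a, List.range b] δ ∧
      δ.getD (n - 1) 0 = a - 1 ∧ ∀ i : ℕ, i < n - 1 → γ.getD i 0 ≤ δ.getD i 0 := by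
  obtain ⟨g, hg⟩ := hγ
  have key : ∀ j : Fin 2,
      ((List.finRange γ.length).filter fun i => decide (g i = j)).map γ.get
        = [List.range a, List.range b].get j := fun j => hg j
  have hL0 : [List.range a, List.range b].get (0 : Fin 2) = List.range a := rfl
  have hL1 : [List.range a, List.range b].get (1 : Fin 2) = List.range b := rfl
  have la : ((List.finRange γ.length).filter fun i => decide (g i = (0 : Fin 2))).length = a := by
    have h := congrArg List.length (key 0)
    rwa [List.length_map, hL0, List.length_range] at h
  have lb : ((List.finRange γ.length).filter fun i => decide (g i = (1 : Fin 2))).length = b := by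
    have h := congrArg List.length (key 1)
    rwa [List.length_map, hL1, List.length_range] at h
  have hm : γ.length = a + b := by
    have htot := countP_not (fun i => decide (g i = (0 : Fin 2))) (List.finRange γ.length)
    have hb2 : ∀ u : Fin 2, (!decide (u = 0)) = decide (u = 1) := by decide
    have hc1 : (List.finRange γ.length).countP (fun i => !decide (g i = (0 : Fin 2)))
        = (List.finRange γ.length).countP (fun i => decide (g i = (1 : Fin 2))) :=
      List.countP_congr (fun x _ => by rw [hb2 (g x)])
    rw [hc1, List.countP_eq_length_filter, List.countP_eq_length_filter, la, lb,
      List.length_finRange] at htot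
    omega
  set G : ℕ → Bool := fun i => if h : i < γ.length then decide (g ⟨i, h⟩ = (0 : Fin 2)) else false
    with hGdef
  have hG : ∀ i : Fin γ.length, G i.val = decide (g i = (0 : Fin 2)) := by
    intro i
    simp [hGdef, i.isLt]
  have hsorted : ∀ j : Fin 2,
      ((List.finRange γ.length).filter fun x => decide (g x = j)).map γ.get
        = List.range ((List.finRange γ.length).filter fun x => decide (g x = j)).length := by
    intro j
    have hj : j = (0 : Fin 2) ∨ j = 1 := by revert j; decide
    rcases hj with rfl | rfl
    · rw [key 0, hL0, la]
    · rw [key 1, hL1, lb]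
  have hval : ∀ i : Fin γ.length,
      γ.get i = ((List.finRange γ.length).filter
        fun x => decide (x.val < i.val) && decide (g x = g i)).length := by
    intro i
    have h2 := map_wv g (g i)
    have h3 := hsorted (g i)
    have h4 := List.map_inj_left.mp (h3.trans h2.symm)
    exact h4 i (List.mem_filter.mpr ⟨List.mem_finRange i, by simp⟩)
  have hvalQ : ∀ (i : ℕ) (h : i < γ.length),
      γ.get ⟨i, h⟩ = if G i then sct G i else i - sct G i := by
    intro i h
    rw [hval ⟨i, h⟩]
    exact wv_eq g G hG ⟨i, h⟩
  set F : ℕ → Bool := Fjump G a γ.length with hFdef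
  have hssucc := sct_succ G
  have hsle := sct_le G
  have hsa : sct G γ.length = a := by
    have h := filter_finRange_length (fun i => decide (g i = (0 : Fin 2))) G hG
    rw [la] at h
    exact h.symm
  have hm2 : 2 ≤ γ.length := by omega
  have tm1 : tmin G a (γ.length - 1) = a - 1 := by
    have e1 := hssucc (γ.length - 1)
    rw [show γ.length - 1 + 1 = γ.length by omega, hsa] at e1
    have e2 := hsle (γ.length - 1)
    simp only [tmin]
    split_ifs at e1 <;> omega
  have htt : ∀ i, i ≤ γ.length - 1 → (List.range i).countP F = tmin G a i := by
    intro i hi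
    have h : (List.range i).countP F
        = (List.range i).countP (fun x => decide (tmin G a (x + 1) = tmin G a x + 1)) :=
      List.countP_congr (fun x hx => by
        have hxi : x < i := List.mem_range.mp hx
        simp [hFdef, Fjump, show x + 1 ≠ γ.length by omega])
    rw [h, countP_jump]
  have hFlast : F (γ.length - 1) = true := by
    simp [hFdef, Fjump, show γ.length - 1 + 1 = γ.length by omega]
  have hcountF : (List.range γ.length).countP F = a := by
    rw [show γ.length = (γ.length - 1) + 1 by omega, countP_range_succ,
      htt (γ.length - 1) le_rfl, tm1, if_pos hFlast]
    omega
  have hcountF' : (List.range γ.length).countP (fun x => !F x) = b := by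
    have h := countP_not F (List.range γ.length)
    simp only [List.length_range] at h
    omega
  set f' : Fin γ.length → Fin 2 := fun i => if F i.val then 0 else 1 with hf'def
  have hqf' : ∀ x : Fin γ.length, F x.val = decide (f' x = 0) := by
    intro x
    cases h : F x.val <;> simp [hf'def, h]
  have hq1f' : ∀ x : Fin γ.length, (!F x.val) = decide (f' x = 1) := by
    intro x
    cases h : F x.val <;> simp [hf'def, h]
  have hlen0 : ((List.finRange γ.length).filter fun i => decide (f' i = 0)).length = a := by
    rw [filter_finRange_length _ F hqf']
    exact hcountF
  have hlen1 : ((List.finRange γ.length).filter fun i => decide (f' i = 1)).length = b := by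
    rw [filter_finRange_length _ (fun x => !F x) hq1f']
    exact hcountF'
  have hshuffle := isShuffle_word f' a b hlen0 hlen1
  have hδval : ∀ (i : ℕ) (h : i < γ.length),
      (List.ofFn fun i : Fin γ.length => ((List.finRange γ.length).filter
          fun x => decide (x.val < i.val) && decide (f' x = f' i)).length).getD i 0
        = if F i then (List.range i).countP F else i - (List.range i).countP F := by
    intro i h
    rw [getD_ofFn _ i h]
    exact wv_eq f' F hqf' ⟨i, h⟩
  refine ⟨_, hshuffle, ?_, ?_⟩
  · have hn1 : n - 1 < γ.length := by omega
    rw [hδval (n - 1) hn1]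
    have hFl : F (n - 1) = true := by
      rw [show n - 1 = γ.length - 1 by omega]
      exact hFlast
    rw [if_pos hFl, htt (n - 1) (by omega), show n - 1 = γ.length - 1 by omega]
    exact tm1
  · intro i hi
    have hiγ : i < γ.length := by omega
    have hgetD : γ.getD i 0 = γ.get ⟨i, hiγ⟩ := by
      rw [List.getD_eq_getElem _ _ hiγ]
      simp [List.get_eq_getElem]
    rw [hgetD, hvalQ i hiγ, hδval i hiγ, htt i (by omega)]
    have e1 := hssucc i
    have e2 := hsle i
    by_cases hF : F i = true
    · have hjump : tmin G a (i + 1) = tmin G a i + 1 := by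
        have h := hF
        simp only [hFdef, Fjump, if_neg (show ¬ i + 1 = γ.length by omega),
          decide_eq_true_eq] at h
        exact h
      rw [if_pos hF]
      by_cases hGi : G i = true
      · rw [if_pos hGi] at e1
        rw [if_pos hGi]
        simp only [tmin] at hjump ⊢
        omega
      · rw [if_neg hGi] at e1
        rw [if_neg hGi]
        simp only [tmin] at hjump ⊢
        omega
    · rw [if_neg hF]
      by_cases hGi : G i = true
      · rw [if_pos hGi]
        simp only [tmin]
        omega
      · rw [if_neg hGi]
        simp only [tmin]
        omega
end

section
/- Let h ≤ k ≤ n and s be positive integers, let λ be a partition of h with at most s parts, and let μ be a partition of k with at most s parts. If either (h = k and λ is dominated by μ) or (h < k and λ is contained in μ), then C_{n,μ,s} ⊆ C_{n,λ,s}. -/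
open MvPolynomial

/-- The lists `β^1(λ), …, β^{λ₁}(λ)` together with the list of `n-k` copies of `s-1`;
an `(n,λ,s)`-staircase is a shuffle of these. -/
def staircaseLists (n k s : ℕ) (L : List ℕ) : List (List ℕ) :=
  ((List.range (L.getD 0 0)).map fun j => List.range (conjList L (j + 1))) ++
    [List.replicate (n - k) (s - 1)]

/-- The set `C_{n,λ,s}` of weak compositions contained componentwise in some
`(n,λ,s)`-staircase. -/
def Cset (n k s : ℕ) (L : List ℕ) : Set (Fin n → ℕ) :=
  {al | ∃ w : List ℕ, IsShuffle (staircaseLists n k s L) w ∧ w.length = n ∧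
    ∀ i : Fin n, al i ≤ w.getD (i : ℕ) 0}

/-- The set of monomials `A_{n,λ,s}`. -/
def Aset (n k s : ℕ) (L : List ℕ) : Set (MvPolynomial (Fin n) ℚ) :=
  monoOf '' Cset n k s L

namespace Stmt9Aux

variable {n : ℕ}

/-- fiber of `g` over `j` -/
def fib (g : Fin n → ℕ) (j : ℕ) : Finset (Fin n) := Finset.univ.filter fun p => g p = j

lemma mem_fib {g : Fin n → ℕ} {j : ℕ} {p : Fin n} : p ∈ fib g j ↔ g p = j := by
  simp [fib]

/-- rank of `p` within a finset -/
def Rk (F : Finset (Fin n)) (p : Fin n) : ℕ := (F.filter fun q => q < p).card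

def wval (s m : ℕ) (g : Fin n → ℕ) (p : Fin n) : ℕ :=
  if g p = m then s - 1 else Rk (fib g (g p)) p

def Stair (n s : ℕ) (c : List ℕ) (f : ℕ) (w : Fin n → ℕ) : Prop :=
  ∃ g : Fin n → ℕ, (∀ p, g p ≤ c.length) ∧
    (∀ j < c.length, (fib g j).card = c.getD j 0) ∧
    (fib g c.length).card = f ∧
    ∀ p, w p = wval s c.length g p

lemma card_le_Rk {F S : Finset (Fin n)} {p : Fin n} (hS : S ⊆ F) (hlt : ∀ q ∈ S, q < p) :
    S.card ≤ Rk F p :=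
  Finset.card_le_card fun q hq => Finset.mem_filter.mpr ⟨hS hq, hlt q hq⟩

lemma Rk_lt_card {F : Finset (Fin n)} {p : Fin n} (hp : p ∈ F) : Rk F p < F.card := by
  refine Finset.card_lt_card ⟨Finset.filter_subset _ _, fun hs => ?_⟩
  have := hs hp
  simp [Finset.mem_filter] at this

lemma Rk_orderIsoOfFin {F : Finset (Fin n)} {a : ℕ} (h : F.card = a) (t : Fin a) :
    Rk F ((F.orderIsoOfFin h t : Fin n)) = t := by
  classical
  have hinj : Function.Injective (fun u : Fin a => ((F.orderIsoOfFin h u : Fin n))) := by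
    intro u v huv
    exact (F.orderIsoOfFin h).injective (Subtype.ext huv)
  have hset : F.filter (fun q => q < (F.orderIsoOfFin h t : Fin n)) =
      (Finset.Iio t).image (fun u => ((F.orderIsoOfFin h u : Fin n))) := by
    ext q
    simp only [Finset.mem_filter, Finset.mem_image, Finset.mem_Iio]
    constructor
    · rintro ⟨hqF, hlt⟩
      obtain ⟨u, hu⟩ := (F.orderIsoOfFin h).surjective ⟨q, hqF⟩
      refine ⟨u, ?_, by rw [hu]⟩
      have h2 : (F.orderIsoOfFin h u) < F.orderIsoOfFin h t := by
        rw [hu]; exact Subtype.mk_lt_mk.mpr hlt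
      exact (F.orderIsoOfFin h).lt_iff_lt.mp h2
    · rintro ⟨u, hu, rfl⟩
      refine ⟨(F.orderIsoOfFin h u).2, ?_⟩
      exact Subtype.mk_lt_mk.mp ((F.orderIsoOfFin h).lt_iff_lt.mpr hu)
  rw [Rk, hset, Finset.card_image_of_injective _ hinj, Fin.card_Iio]

lemma exists_orderIso_eq {F : Finset (Fin n)} {a : ℕ} (h : F.card = a) {p : Fin n} (hp : p ∈ F) :
    ∃ t : Fin a, (F.orderIsoOfFin h t : Fin n) = p ∧ Rk F p = t := by
  obtain ⟨t, ht⟩ := (F.orderIsoOfFin h).surjective ⟨p, hp⟩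
  refine ⟨t, by rw [ht], ?_⟩
  have := Rk_orderIsoOfFin h t
  rw [ht] at this
  exact this

lemma length_filter_lt_get {α : Type*} [LinearOrder α] :
    ∀ {l : List α}, l.Pairwise (· < ·) →
      ∀ (i : ℕ) (hi : i < l.length),
        (l.filter (fun q => decide (q < l.get ⟨i, hi⟩))).length = i := by
  intro l
  induction l with
  | nil => intro _ i hi; simp at hi
  | cons a t ih =>
    intro hp i hi
    have ha : ∀ q ∈ t, a < q := fun q hq => (List.pairwise_cons.mp hp).1 q hq
    have ht : t.Pairwise (· < ·) := (List.pairwise_cons.mp hp).2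
    match i with
    | 0 =>
      have hg : (a :: t).get ⟨0, hi⟩ = a := rfl
      rw [hg, List.filter_cons_of_neg (by simp), List.filter_eq_nil_iff.mpr, List.length_nil]
      intro q hq
      simp only [decide_eq_true_eq]
      exact lt_asymm (ha q hq)
    | (i+1) =>
      have hit : i < t.length := by simpa using hi
      have hget : (a :: t).get ⟨i+1, hi⟩ = t.get ⟨i, hit⟩ := rfl
      rw [hget, List.filter_cons_of_pos (by simp [ha _ (List.getElem_mem hit)]),
        List.length_cons, ih ht i hit]

section FinRangeFilter

variable (pr : Fin n → Prop) [DecidablePred pr]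

lemma nodup_filter_finRange :
    ((List.finRange n).filter (fun q => decide (pr q))).Nodup :=
  (List.nodup_finRange n).filter _

lemma toFinset_filter_finRange :
    ((List.finRange n).filter (fun q => decide (pr q))).toFinset = Finset.univ.filter pr := by
  ext q
  simp [List.mem_filter]

lemma length_filter_finRange :
    ((List.finRange n).filter (fun q => decide (pr q))).length = (Finset.univ.filter pr).card := by
  rw [← toFinset_filter_finRange pr, List.toFinset_card_of_nodup (nodup_filter_finRange pr)]

lemma mem_filter_finRange {p : Fin n} :
    p ∈ (List.finRange n).filter (fun q => decide (pr q)) ↔ pr p := by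
  simp [List.mem_filter]

lemma rank_filter_finRange (i : ℕ)
    (hi : i < ((List.finRange n).filter (fun q => decide (pr q))).length) :
    Rk (Finset.univ.filter pr) (((List.finRange n).filter (fun q => decide (pr q))).get ⟨i, hi⟩)
      = i := by
  set P := (List.finRange n).filter (fun q => decide (pr q)) with hP
  set x := P.get ⟨i, hi⟩ with hx
  have hPsort : P.Pairwise (· < ·) := (List.pairwise_lt_finRange n).filter _
  have hset : (Finset.univ.filter pr).filter (fun q => q < x)
      = (P.filter (fun q => decide (q < x))).toFinset := by
    ext q
    simp only [Finset.mem_filter, Finset.mem_univ, true_and, List.mem_toFinset, List.mem_filter,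
      decide_eq_true_eq, hP, List.mem_finRange]
  have : Rk (Finset.univ.filter pr) x = (P.filter (fun q => decide (q < x))).length := by
    rw [Rk, hset, List.toFinset_card_of_nodup (hPsort.nodup.filter _)]
  rw [this, hx, length_filter_lt_get hPsort i hi]

end FinRangeFilter

end Stmt9Aux
namespace Stmt9Aux

variable {n : ℕ}

lemma Ls_length (s : ℕ) (c : List ℕ) (f : ℕ) :
    (c.map List.range ++ [List.replicate f (s - 1)]).length = c.length + 1 := by simp

lemma Ls_get_lt (s : ℕ) (c : List ℕ) (f : ℕ) {j : ℕ} (hj : j < c.length)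
    (hj' : j < (c.map List.range ++ [List.replicate f (s - 1)]).length) :
    (c.map List.range ++ [List.replicate f (s - 1)]).get ⟨j, hj'⟩
      = List.range (c.getD j 0) := by
  rw [List.get_eq_getElem, List.getElem_append_left (by simpa using hj)]
  rw [List.getElem_map]
  rw [List.getD_eq_getElem _ _ hj]

lemma Ls_get_last (s : ℕ) (c : List ℕ) (f : ℕ)
    (hj' : c.length < (c.map List.range ++ [List.replicate f (s - 1)]).length) :
    (c.map List.range ++ [List.replicate f (s - 1)]).get ⟨c.length, hj'⟩
      = List.replicate f (s - 1) := by
  rw [List.get_eq_getElem, List.getElem_append_right (by simp)]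
  simp

lemma map_get_filter_eq {w : List ℕ} (pr : Fin w.length → Prop) [DecidablePred pr] {l : List ℕ}
    (hmap : ((List.finRange w.length).filter (fun q => decide (pr q))).map w.get = l)
    {p : Fin w.length} (hp : pr p) :
    w.get p = l.getD (Rk (Finset.univ.filter pr) p) 0
      ∧ Rk (Finset.univ.filter pr) p < l.length := by
  set P := (List.finRange w.length).filter (fun q => decide (pr q)) with hP
  have hpP : p ∈ P := (mem_filter_finRange pr).mpr hp
  obtain ⟨⟨i, hi⟩, hip⟩ := List.mem_iff_get.mp hpP
  have hrk : Rk (Finset.univ.filter pr) p = i := by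
    rw [← hip]; exact rank_filter_finRange pr i hi
  have hll : l.length = P.length := by rw [← hmap, List.length_map]
  have hil : i < l.length := by rw [hll]; exact hi
  refine ⟨?_, by rw [hrk]; exact hil⟩
  rw [hrk, List.getD_eq_getElem _ _ hil]
  have h2 : l[i] = (P.map w.get)[i]'(by rw [List.length_map]; exact hi) :=
    List.getElem_of_eq hmap.symm hil
  rw [h2, List.getElem_map, ← hip]
  rfl

lemma map_get_filter_eq_of {w : List ℕ} (pr : Fin w.length → Prop) [DecidablePred pr]
    (l : List ℕ) (hlen : (Finset.univ.filter pr).card = l.length)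
    (hval : ∀ p, pr p → w.get p = l.getD (Rk (Finset.univ.filter pr) p) 0) :
    ((List.finRange w.length).filter (fun q => decide (pr q))).map w.get = l := by
  set P := (List.finRange w.length).filter (fun q => decide (pr q)) with hP
  have hPl : P.length = l.length := by
    rw [hP, length_filter_finRange pr, hlen]
  apply List.ext_getElem (by rw [List.length_map]; exact hPl)
  intro i hi1 hi2
  rw [List.getElem_map]
  have hiP : i < P.length := by rw [List.length_map] at hi1; exact hi1
  have hmem : P[i] ∈ P := List.getElem_mem hiP
  have hpr : pr P[i] := (mem_filter_finRange pr).mp hmem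
  have hrk : Rk (Finset.univ.filter pr) P[i] = i := by
    have := rank_filter_finRange pr i hiP
    simpa [List.get_eq_getElem] using this
  rw [hval _ hpr, hrk, List.getD_eq_getElem _ _ hi2]

theorem isShuffle_iff_stair (s : ℕ) (c : List ℕ) (f : ℕ) (w : List ℕ) :
    IsShuffle (c.map List.range ++ [List.replicate f (s - 1)]) w ↔
      Stair w.length s c f w.get := by
  constructor
  · rintro ⟨g₀, hg₀⟩
    refine ⟨fun p => (g₀ p : ℕ), ?_, ?_, ?_, ?_⟩
    · intro p
      have h2 : (g₀ p : ℕ) < c.length + 1 := by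
        rw [← Ls_length s c f]; exact (g₀ p).isLt
      exact Nat.lt_succ_iff.mp h2
    · intro j hj
      have hj' : j < (c.map List.range ++ [List.replicate f (s - 1)]).length := by
        rw [Ls_length]; omega
      have hmap := hg₀ ⟨j, hj'⟩
      have hmap2 : ((List.finRange w.length).filter
          (fun q => decide ((g₀ q : ℕ) = j))).map w.get = List.range (c.getD j 0) := by
        refine Eq.trans ?_ (Ls_get_lt s c f hj hj')
        rw [← hmap]
        congr 1
        apply List.filter_congr
        intro q _
        exact decide_eq_decide.mpr ⟨fun h2 => Fin.ext h2, fun h2 => congrArg Fin.val h2⟩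
      have h3 : (fib (fun p => (g₀ p : ℕ)) j).card
          = ((List.finRange w.length).filter (fun q => decide ((g₀ q : ℕ) = j))).length := by
        rw [length_filter_finRange]; rfl
      rw [h3, ← List.length_map w.get, hmap2, List.length_range]
    · have hj' : c.length < (c.map List.range ++ [List.replicate f (s - 1)]).length := by
        rw [Ls_length]; omega
      have hmap := hg₀ ⟨c.length, hj'⟩
      have hmap2 : ((List.finRange w.length).filter
          (fun q => decide ((g₀ q : ℕ) = c.length))).map w.get
          = List.replicate f (s - 1) := by
        refine Eq.trans ?_ (Ls_get_last s c f hj')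
        rw [← hmap]
        congr 1
        apply List.filter_congr
        intro q _
        exact decide_eq_decide.mpr ⟨fun h2 => Fin.ext h2, fun h2 => congrArg Fin.val h2⟩
      have h3 : (fib (fun p => (g₀ p : ℕ)) c.length).card
          = ((List.finRange w.length).filter
              (fun q => decide ((g₀ q : ℕ) = c.length))).length := by
        rw [length_filter_finRange]; rfl
      rw [h3, ← List.length_map w.get, hmap2, List.length_replicate]
    · intro p
      have hjm : (g₀ p : ℕ) < c.length + 1 := by
        rw [← Ls_length s c f]; exact (g₀ p).isLt
      have hj' : (g₀ p : ℕ) < (c.map List.range ++ [List.replicate f (s - 1)]).length :=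
        (g₀ p).isLt
      have hmap := hg₀ ⟨(g₀ p : ℕ), hj'⟩
      have hmap2 : ((List.finRange w.length).filter
          (fun q => decide ((g₀ q : ℕ) = (g₀ p : ℕ)))).map w.get
          = (c.map List.range ++ [List.replicate f (s - 1)]).get ⟨(g₀ p : ℕ), hj'⟩ := by
        rw [← hmap]
        congr 1
        apply List.filter_congr
        intro q _
        exact decide_eq_decide.mpr ⟨fun h2 => Fin.ext h2, fun h2 => congrArg Fin.val h2⟩
      rcases Nat.lt_or_ge (g₀ p : ℕ) c.length with hlt2 | hge
      · rw [Ls_get_lt s c f hlt2 hj'] at hmap2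
        obtain ⟨hv, hlt⟩ := map_get_filter_eq (fun q => (g₀ q : ℕ) = (g₀ p : ℕ)) hmap2 rfl
        rw [List.length_range] at hlt
        rw [hv, List.getD_eq_getElem _ _ (by rw [List.length_range]; exact hlt),
          List.getElem_range]
        rw [wval, if_neg (by omega)]
        rfl
      · have hjeq : (g₀ p : ℕ) = c.length := by omega
        have e1 : (c.map List.range ++ [List.replicate f (s - 1)]).get ⟨(g₀ p : ℕ), hj'⟩
            = List.replicate f (s - 1) := by
          have h4 : (⟨(g₀ p : ℕ), hj'⟩ :
              Fin (c.map List.range ++ [List.replicate f (s - 1)]).length)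
              = ⟨c.length, by rw [Ls_length]; omega⟩ := Fin.ext hjeq
          rw [h4]; exact Ls_get_last s c f _
        rw [e1] at hmap2
        obtain ⟨hv, hlt⟩ := map_get_filter_eq (fun q => (g₀ q : ℕ) = (g₀ p : ℕ)) hmap2 rfl
        rw [hv, List.getD_eq_getElem _ _ (by rwa [List.length_replicate] at hlt ⊢),
          List.getElem_replicate]
        rw [wval, if_pos hjeq]
  · rintro ⟨g, hb, hc, hf, hv⟩
    refine ⟨fun p => ⟨g p, by rw [Ls_length]; exact Nat.lt_succ_of_le (hb p)⟩, ?_⟩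
    intro jf
    have hjm : (jf : ℕ) < c.length + 1 := by rw [← Ls_length s c f]; exact jf.isLt
    have hswap : ((List.finRange w.length).filter fun i =>
          decide ((⟨g i, by rw [Ls_length]; exact Nat.lt_succ_of_le (hb i)⟩ :
            Fin (c.map List.range ++ [List.replicate f (s - 1)]).length) = jf))
        = ((List.finRange w.length).filter fun i => decide (g i = (jf : ℕ))) := by
      apply List.filter_congr
      intro q _
      exact decide_eq_decide.mpr ⟨fun h2 => congrArg Fin.val h2, fun h2 => Fin.ext h2⟩
    rw [hswap]
    rcases Nat.lt_or_ge (jf : ℕ) c.length with hlt2 | hge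
    · rw [Ls_get_lt s c f hlt2 jf.isLt]
      apply map_get_filter_eq_of (fun q => g q = (jf : ℕ))
      · rw [List.length_range]
        exact hc _ hlt2
      · intro p hp
        rw [hv p, wval, if_neg (by omega), hp]
        have hcrd : (fib g (jf : ℕ)).card = c.getD (jf : ℕ) 0 := hc _ hlt2
        have hRk : Rk (fib g (jf : ℕ)) p < c.getD (jf : ℕ) 0 := by
          rw [← hcrd]; exact Rk_lt_card (mem_fib.mpr hp)
        rw [List.getD_eq_getElem _ _ (by rwa [List.length_range]), List.getElem_range]
        rfl
    · have hjeq : (jf : ℕ) = c.length := by omega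
      have e1 : (c.map List.range ++ [List.replicate f (s - 1)]).get jf
          = List.replicate f (s - 1) := by
        have h4 : jf = ⟨c.length, by rw [Ls_length]; omega⟩ := Fin.ext hjeq
        rw [h4]; exact Ls_get_last s c f _
      rw [e1]
      apply map_get_filter_eq_of (fun q => g q = (jf : ℕ))
      · rw [List.length_replicate, hjeq]
        exact hf
      · intro p hp
        have hcrd : (fib g (jf : ℕ)).card = f := by rw [hjeq]; exact hf
        have h5 : Rk (fib g (jf : ℕ)) p < f :=
          lt_of_lt_of_eq (Rk_lt_card (mem_fib.mpr hp)) hcrd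
        rw [hv p, wval, if_pos (by rw [hp, hjeq]),
          List.getD_eq_getElem _ _ (by rw [List.length_replicate]; exact h5),
          List.getElem_replicate]

end Stmt9Aux
namespace Stmt9Aux

variable {n : ℕ}

lemma Rk_le_Rk {F G : Finset (Fin n)} {p : Fin n}
    (h : ∀ q, q ∈ F → q < p → q ∈ G) : Rk F p ≤ Rk G p := by
  apply Finset.card_le_card
  intro q hq
  rw [Finset.mem_filter] at hq ⊢
  exact ⟨h q hq.1 hq.2, hq.2⟩

lemma getD_set_self {c : List ℕ} {j : ℕ} (hj : j < c.length) (v : ℕ) :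
    (c.set j v).getD j 0 = v := by
  rw [List.getD_eq_getElem _ 0 (by simpa using hj)]
  exact List.getElem_set_self _

lemma getD_set_ne {c : List ℕ} {i t : ℕ} (h : i ≠ t) (ht : t < c.length) (v : ℕ) :
    (c.set i v).getD t 0 = c.getD t 0 := by
  rw [List.getD_eq_getElem _ 0 (by simpa using ht), List.getElem_set_ne h,
    List.getD_eq_getElem _ 0 ht]

lemma getD_append_left {c d : List ℕ} {t : ℕ} (ht : t < c.length) :
    (c ++ d).getD t 0 = c.getD t 0 := by
  rw [List.getD_eq_getElem _ 0 (by rw [List.length_append]; omega),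
    List.getElem_append_left ht, List.getD_eq_getElem _ 0 ht]

lemma getD_append_last {c : List ℕ} (x : ℕ) : (c ++ [x]).getD c.length 0 = x := by
  rw [List.getD_eq_getElem _ 0 (by simp)]
  rw [List.getElem_append_right (le_refl _)]
  simp

/-- Step C: decrement a chain, converting its top entry into a free entry. -/
lemma stair_decr {s : ℕ} {c : List ℕ} {f : ℕ} {w : Fin n → ℕ}
    (hst : Stair n s c f w) {j : ℕ} (hj : j < c.length) (hpos : 0 < c.getD j 0)
    (hcs : c.getD j 0 ≤ s) :
    ∃ w' : Fin n → ℕ, Stair n s (c.set j (c.getD j 0 - 1)) (f + 1) w' ∧ ∀ p, w p ≤ w' p := by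
  obtain ⟨g, hb, hcard, hfree, hval⟩ := hst
  have hne : (fib g j).Nonempty := by
    rw [← Finset.card_pos, hcard j hj]; exact hpos
  set pstar := (fib g j).max' hne with hpstar
  have hgp : g pstar = j := mem_fib.mp ((fib g j).max'_mem hne)
  set g' := Function.update g pstar c.length with hg'
  have hlen : (c.set j (c.getD j 0 - 1)).length = c.length := List.length_set
  have hfib_ne : ∀ t, t ≠ j → fib g' t = fib g t ∨ (t = c.length) := by
    intro t h1
    by_cases h2 : t = c.length
    · exact Or.inr h2
    · left
      ext q
      simp only [mem_fib, hg', Function.update_apply]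
      by_cases hq : q = pstar
      · subst hq; rw [if_pos rfl, hgp]; omega
      · rw [if_neg hq]
  have hfib_eq : ∀ t, t ≠ j → t ≠ c.length → fib g' t = fib g t := by
    intro t h1 h2
    rcases hfib_ne t h1 with h | h
    · exact h
    · exact absurd h h2
  have hfib_j : fib g' j = (fib g j).erase pstar := by
    ext q
    simp only [mem_fib, hg', Function.update_apply, Finset.mem_erase]
    by_cases hq : q = pstar
    · subst hq; rw [if_pos rfl]
      constructor
      · intro h2; omega
      · rintro ⟨h2, _⟩; exact absurd rfl h2
    · rw [if_neg hq]; simp [hq, mem_fib]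
  have hfib_top : fib g' c.length = insert pstar (fib g c.length) := by
    ext q
    simp only [mem_fib, hg', Function.update_apply, Finset.mem_insert]
    by_cases hq : q = pstar
    · subst hq; simp
    · rw [if_neg hq]; simp [hq, mem_fib]
  refine ⟨fun p => wval s (c.set j (c.getD j 0 - 1)).length g' p, ⟨g', ?_, ?_, ?_, fun p => rfl⟩, ?_⟩
  · intro p
    rw [hlen, hg', Function.update_apply]
    by_cases hq : p = pstar
    · rw [if_pos hq]
    · rw [if_neg hq]; exact hb p
  · intro t ht
    rw [hlen] at ht
    by_cases h1 : t = j
    · subst h1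
      rw [hfib_j, Finset.card_erase_of_mem ((fib g t).max'_mem hne), hcard t hj,
        getD_set_self hj]
    · rw [hfib_eq t h1 (by omega), hcard t ht, getD_set_ne (fun h => h1 h.symm) ht]
  · rw [hlen, hfib_top, Finset.card_insert_of_notMem (by rw [mem_fib, hgp]; omega), hfree]
  · intro p
    rw [hval p]
    simp only [hlen]
    by_cases hq : p = pstar
    · subst hq
      rw [wval, wval, hgp, if_neg (by omega), hg', Function.update_self, if_pos rfl]
      have h5 : Rk (fib g j) pstar < c.getD j 0 := by
        rw [← hcard j hj]
        exact Rk_lt_card ((fib g j).max'_mem hne)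
      omega
    · have hgq : g' p = g p := by rw [hg', Function.update_of_ne hq]
      rw [wval, wval, hgq]
      by_cases hfr : g p = c.length
      · rw [if_pos hfr, if_pos hfr]
      · rw [if_neg hfr, if_neg hfr]
        by_cases hj2 : g p = j
        · rw [hj2, hfib_j]
          apply Rk_le_Rk
          intro q hq2 hq3
          rw [Finset.mem_erase]
          refine ⟨?_, hq2⟩
          have hple : p ≤ pstar := (fib g j).le_max' p (mem_fib.mpr hj2)
          intro hqe
          rw [hqe] at hq3
          exact absurd hq3 (not_lt.mpr hple)
        · rw [hfib_eq (g p) hj2 hfr]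
  
/-- Step Z: drop a trailing empty chain. -/
lemma stair_dropzero {s : ℕ} {c : List ℕ} {f : ℕ} {w : Fin n → ℕ}
    (hst : Stair n s (c ++ [0]) f w) : Stair n s c f w := by
  obtain ⟨g, hb, hcard, hfree, hval⟩ := hst
  have hlen : (c ++ [0]).length = c.length + 1 := by simp
  have hempty : fib g c.length = ∅ := by
    rw [← Finset.card_eq_zero, hcard c.length (by omega)]
    rw [getD_append_last]
  have hnot : ∀ p, g p ≠ c.length := by
    intro p hp
    have : p ∈ fib g c.length := mem_fib.mpr hp
    rw [hempty] at this
    exact absurd this (Finset.notMem_empty p)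
  set g' : Fin n → ℕ := fun p => if g p = c.length + 1 then c.length else g p with hg'
  have hfib_lt : ∀ t, t < c.length → fib g' t = fib g t := by
    intro t ht
    ext q
    simp only [mem_fib, hg']
    by_cases hq : g q = c.length + 1
    · rw [if_pos hq]; omega
    · rw [if_neg hq]
  have hfib_top : fib g' c.length = fib g (c.length + 1) := by
    ext q
    simp only [mem_fib, hg']
    by_cases hq : g q = c.length + 1
    · rw [if_pos hq]; omega
    · rw [if_neg hq]; constructor
      · intro h2; exact absurd h2 (hnot q)
      · intro h2; exact absurd h2 hq
  refine ⟨g', ?_, ?_, ?_, ?_⟩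
  · intro p
    simp only [hg']
    have := hb p
    rw [hlen] at this
    by_cases hq : g p = c.length + 1
    · rw [if_pos hq]
    · rw [if_neg hq]
      have := hnot p
      omega
  · intro t ht
    rw [hfib_lt t ht, hcard t (by rw [hlen]; omega)]
    rw [getD_append_left ht]
  · rw [hfib_top, ← hlen]
    exact hfree
  · intro p
    rw [hval p, wval, wval, hlen]
    by_cases hq : g p = c.length + 1
    · rw [if_pos hq]
      have : g' p = c.length := by rw [hg']; simp [hq]
      rw [if_pos this]
    · have hgq : g' p = g p := by rw [hg']; simp [hq]
      have hplt : g p < c.length := by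
        have := hb p; rw [hlen] at this; have := hnot p; omega
      rw [if_neg hq, hgq, if_neg (by omega)]
      rw [hfib_lt (g p) hplt]

end Stmt9Aux
namespace Stmt9Aux

variable {n : ℕ}

lemma min_eq_max_imp {α : Type*} [LinearOrder α] {x y : α} (h : min x y = max x y) : x = y := by
  rcases le_total x y with hxy | hxy
  · have h1 : min x y = x := min_eq_left hxy
    have h2 : max x y = y := max_eq_right hxy
    rw [h1, h2] at h; exact h
  · have h1 : min x y = y := min_eq_right hxy
    have h2 : max x y = x := max_eq_left hxy
    rw [h1, h2] at h; exact h.symm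

lemma Rk_lt_Rk_of_lt {F : Finset (Fin n)} {q p : Fin n} (hq : q ∈ F) (hqp : q < p) :
    Rk F q < Rk F p := by
  have hsub : insert q (F.filter (fun r => r < q)) ⊆ F.filter (fun r => r < p) := by
    intro r hr
    rcases Finset.mem_insert.mp hr with h | h
    · subst h; exact Finset.mem_filter.mpr ⟨hq, hqp⟩
    · rw [Finset.mem_filter] at h ⊢
      exact ⟨h.1, lt_trans h.2 hqp⟩
  have hc := Finset.card_le_card hsub
  rw [Finset.card_insert_of_notMem (by simp)] at hc
  exact lt_of_lt_of_le (Nat.lt_succ_self _) hc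

lemma rank_eq_inj {F : Finset (Fin n)} {q q' : Fin n} (hq : q ∈ F) (hq' : q' ∈ F)
    (h : Rk F q = Rk F q') : q = q' := by
  obtain ⟨t, ht, hrt⟩ := exists_orderIso_eq rfl hq
  obtain ⟨t', ht', hrt'⟩ := exists_orderIso_eq rfl hq'
  have : t = t' := Fin.ext (by rw [← hrt, ← hrt', h])
  rw [← ht, ← ht', this]

lemma card_filter_lt_fin {b : ℕ} {t : ℕ} (htb : t ≤ b) :
    ((Finset.univ : Finset (Fin b)).filter (fun u : Fin b => (u : ℕ) < t)).card = t := by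
  rcases Nat.lt_or_ge t b with h | h
  · have he : (Finset.univ : Finset (Fin b)).filter (fun u : Fin b => (u : ℕ) < t)
        = Finset.Iio ⟨t, h⟩ := by
      ext u; simp [Fin.lt_def]
    rw [he, Fin.card_Iio]
  · have hteq : t = b := le_antisymm htb h
    subst hteq
    have he : (Finset.univ : Finset (Fin t)).filter (fun u : Fin t => (u : ℕ) < t) = Finset.univ := by
      ext u; simp [u.isLt]
    rw [he, Finset.card_univ, Fintype.card_fin]

/-- Step B: move a box from chain `j` to the (at least as long) chain `i`. -/
lemma stair_move {s : ℕ} {c : List ℕ} {f : ℕ} {w : Fin n → ℕ}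
    (hst : Stair n s c f w) {i j : ℕ} (hij : i ≠ j) (hi : i < c.length) (hj : j < c.length)
    (hba : c.getD j 0 ≤ c.getD i 0) (hbpos : 0 < c.getD j 0) :
    ∃ w' : Fin n → ℕ,
      Stair n s ((c.set i (c.getD i 0 + 1)).set j (c.getD j 0 - 1)) f w' ∧ ∀ p, w p ≤ w' p := by
  classical
  obtain ⟨g, hb, hcard, hfree, hval⟩ := hst
  set a := c.getD i 0 with ha
  set b := c.getD j 0 with hbdef
  have hXc : (fib g i).card = a := hcard i hi
  have hYc : (fib g j).card = b := hcard j hj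
  set qe : Fin a → Fin n := fun t => ((fib g i).orderIsoOfFin hXc t : Fin n) with hqe
  set re : Fin b → Fin n := fun t => ((fib g j).orderIsoOfFin hYc t : Fin n) with hre
  have hqemem : ∀ t, qe t ∈ fib g i := fun t => ((fib g i).orderIsoOfFin hXc t).2
  have hremem : ∀ t, re t ∈ fib g j := fun t => ((fib g j).orderIsoOfFin hYc t).2
  have hgqe : ∀ t, g (qe t) = i := fun t => mem_fib.mp (hqemem t)
  have hgre : ∀ t, g (re t) = j := fun t => mem_fib.mp (hremem t)
  have hqemono : ∀ {t u : Fin a}, t < u → qe t < qe u := by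
    intro t u htu
    exact Subtype.mk_lt_mk.mp (((fib g i).orderIsoOfFin hXc).lt_iff_lt.mpr htu)
  have hremono : ∀ {t u : Fin b}, t < u → re t < re u := by
    intro t u htu
    exact Subtype.mk_lt_mk.mp (((fib g j).orderIsoOfFin hYc).lt_iff_lt.mpr htu)
  have hrkqe : ∀ t, Rk (fib g i) (qe t) = (t : ℕ) := fun t => Rk_orderIsoOfFin hXc t
  have hrkre : ∀ t, Rk (fib g j) (re t) = (t : ℕ) := fun t => Rk_orderIsoOfFin hYc t
  have hne_qr : ∀ (t : Fin a) (u : Fin b), qe t ≠ re u := by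
    intro t u h
    have h1 := hgqe t
    rw [h, hgre u] at h1
    exact hij h1.symm
  have hbla : b ≤ a := hba
  set qc : Fin b → Fin n := fun t => qe (Fin.castLE hbla t) with hqc
  set me : Fin b → Fin n := fun t => min (qc t) (re t) with hme
  set Me : Fin b → Fin n := fun t => max (qc t) (re t) with hMe
  have hgqc : ∀ t, g (qc t) = i := fun t => hgqe _
  have hrkqc : ∀ t : Fin b, Rk (fib g i) (qc t) = (t : ℕ) := fun t => hrkqe _
  have hme_cases : ∀ t, me t = qc t ∨ me t = re t := fun t => min_choice _ _
  have hMe_cases : ∀ t, Me t = qc t ∨ Me t = re t := fun t => max_choice _ _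
  have hme_rk : ∀ t : Fin b, Rk (fib g (g (me t))) (me t) = (t : ℕ) := by
    intro t
    rcases hme_cases t with h | h
    · rw [h, hgqc]; exact hrkqc t
    · rw [h, hgre]; exact hrkre t
  have hMe_rk : ∀ t : Fin b, Rk (fib g (g (Me t))) (Me t) = (t : ℕ) := by
    intro t
    rcases hMe_cases t with h | h
    · rw [h, hgqc]; exact hrkqc t
    · rw [h, hgre]; exact hrkre t
  have hme_mem : ∀ t, me t ∈ fib g i ∪ fib g j := by
    intro t
    rcases hme_cases t with h | h
    · rw [h]; exact Finset.mem_union_left _ (hqemem _)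
    · rw [h]; exact Finset.mem_union_right _ (hremem _)
  have hMe_mem : ∀ t, Me t ∈ fib g i ∪ fib g j := by
    intro t
    rcases hMe_cases t with h | h
    · rw [h]; exact Finset.mem_union_left _ (hqemem _)
    · rw [h]; exact Finset.mem_union_right _ (hremem _)
  have hqcinj : ∀ {t u : Fin b}, qc t = qc u → t = u := by
    intro t u h
    have := rank_eq_inj (hqemem (Fin.castLE hbla t)) (hqemem (Fin.castLE hbla u)) ?_
    · have h2 : Fin.castLE hbla t = Fin.castLE hbla u := by
        apply Fin.ext
        have e1 := hrkqc t
        have e2 := hrkqc u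
        rw [h] at e1
        simp [Fin.coe_castLE] at e1 e2 ⊢
        omega
      exact Fin.ext (congrArg Fin.val h2 : ((Fin.castLE hbla t) : ℕ) = _)
    · rw [show qe (Fin.castLE hbla t) = qc t from rfl, show qe (Fin.castLE hbla u) = qc u from rfl,
        h]
  have hreinj : ∀ {t u : Fin b}, re t = re u → t = u := by
    intro t u h
    apply Fin.ext
    have e1 := hrkre t
    have e2 := hrkre u
    rw [h] at e1
    omega
  have hme_ne_Me : ∀ t u : Fin b, me t ≠ Me u := by
    intro t u h
    have htu : t = u := by
      rcases hme_cases t with h1 | h1 <;> rcases hMe_cases u with h2 | h2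
      · exact hqcinj (by rw [← h1, ← h2, h])
      · exact absurd (by rw [← h1, ← h2, h] : qc t = re u) (hne_qr _ _)
      · exact absurd (by rw [← h2, ← h1, ← h] : qc u = re t).symm
          (fun hh => hne_qr _ _ hh.symm)
      · exact hreinj (by rw [← h1, ← h2, h])
    subst htu
    have : qc t = re t := min_eq_max_imp h
    exact hne_qr _ _ this
  have hmemono : ∀ {t u : Fin b}, t < u → me t < me u := by
    intro t u htu
    apply min_lt_min
    · exact hqemono htu
    · exact hremono htu
  have hMemono : ∀ {t u : Fin b}, t < u → Me t < Me u := by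
    intro t u htu
    apply max_lt_max
    · exact hqemono htu
    · exact hremono htu
  have hMeinj : ∀ {t u : Fin b}, Me t = Me u → t = u := by
    intro t u h
    rcases lt_trichotomy t u with h1 | h1 | h1
    · exact absurd h (ne_of_lt (hMemono h1))
    · exact h1
    · exact absurd h.symm (ne_of_lt (hMemono h1))
  set Y' : Finset (Fin n) :=
    ((Finset.univ : Finset (Fin b)).filter (fun u : Fin b => (u : ℕ) < b - 1)).image Me with hY'
  have hY'mem : ∀ {p : Fin n}, p ∈ Y' ↔ ∃ t : Fin b, (t : ℕ) < b - 1 ∧ Me t = p := by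
    intro p
    rw [hY']
    constructor
    · intro hp
      obtain ⟨t, ht1, ht2⟩ := Finset.mem_image.mp hp
      exact ⟨t, (Finset.mem_filter.mp ht1).2, ht2⟩
    · rintro ⟨t, ht1, ht2⟩
      exact Finset.mem_image.mpr ⟨t, Finset.mem_filter.mpr ⟨Finset.mem_univ t, ht1⟩, ht2⟩
  have hY'sub : ∀ p ∈ Y', p ∈ fib g i ∪ fib g j := by
    intro p hp
    obtain ⟨t, _, ht⟩ := hY'mem.mp hp
    rw [← ht]; exact hMe_mem t
  have hY'card : Y'.card = b - 1 := by
    rw [hY', Finset.card_image_of_injOn (fun t _ u _ h => hMeinj h), card_filter_lt_fin (by omega)]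
  have hY'rk : ∀ p ∈ Y', Rk (fib g (g p)) p < b - 1 := by
    intro p hp
    obtain ⟨t, ht1, ht2⟩ := hY'mem.mp hp
    rw [← ht2, hMe_rk]; exact ht1
  have hme_notY' : ∀ t : Fin b, me t ∉ Y' := by
    intro t ht
    obtain ⟨u, _, hu⟩ := hY'mem.mp ht
    exact hme_ne_Me t u hu.symm
  set g' : Fin n → ℕ :=
    fun p => if p ∈ Y' then j else if g p = i ∨ g p = j then i else g p with hg'
  have hfib'_j : fib g' j = Y' := by
    ext q
    simp only [mem_fib, hg']
    by_cases h1 : q ∈ Y'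
    · simp [h1]
    · rw [if_neg h1]
      by_cases h3 : g q = i ∨ g q = j
      · rw [if_pos h3]
        exact iff_of_false hij (fun h => absurd h h1)
      · rw [if_neg h3]
        exact iff_of_false (fun h => h3 (Or.inr h)) (fun h => absurd h h1)
  have hfib'_i : fib g' i = (fib g i ∪ fib g j) \ Y' := by
    ext q
    simp only [mem_fib, hg', Finset.mem_sdiff, Finset.mem_union, mem_fib]
    by_cases h1 : q ∈ Y'
    · rw [if_pos h1]
      exact iff_of_false (fun h => hij h.symm) (fun h => h.2 h1)
    · rw [if_neg h1]
      by_cases h3 : g q = i ∨ g q = j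
      · rw [if_pos h3]
        exact iff_of_true rfl ⟨h3, h1⟩
      · rw [if_neg h3]
        exact ⟨fun h => absurd (Or.inl h) h3, fun h => absurd h.1 h3⟩
  have hfib'_o : ∀ t, t ≠ i → t ≠ j → fib g' t = fib g t := by
    intro t ht1 ht2
    ext q
    simp only [mem_fib, hg']
    by_cases h1 : q ∈ Y'
    · rw [if_pos h1]
      refine iff_of_false (fun h => ht2 h.symm) (fun h => ?_)
      rcases Finset.mem_union.mp (hY'sub q h1) with h2 | h2
      · exact ht1 ((mem_fib.mp h2) ▸ h).symm
      · exact ht2 ((mem_fib.mp h2) ▸ h).symm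
    · rw [if_neg h1]
      by_cases h3 : g q = i ∨ g q = j
      · rw [if_pos h3]
        refine iff_of_false (fun h => ht1 h.symm) (fun h => ?_)
        rcases h3 with h2 | h2
        · exact ht1 (h ▸ h2)
        · exact ht2 (h ▸ h2)
      · rw [if_neg h3]
  have hdisj : Disjoint (fib g i) (fib g j) := by
    rw [Finset.disjoint_left]
    intro q hq1 hq2
    exact hij ((mem_fib.mp hq1) ▸ (mem_fib.mp hq2) ▸ rfl : i = j)
  set c2 := (c.set i (a + 1)).set j (b - 1) with hc2
  have hlen2 : c2.length = c.length := by simp [hc2]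
  refine ⟨fun p => wval s c2.length g' p, ⟨g', ?_, ?_, ?_, fun p => rfl⟩, ?_⟩
  · intro p
    rw [hlen2]
    simp only [hg']
    by_cases h1 : p ∈ Y'
    · rw [if_pos h1]; omega
    · rw [if_neg h1]
      by_cases h3 : g p = i ∨ g p = j
      · rw [if_pos h3]; omega
      · rw [if_neg h3]; exact hb p
  · intro t ht
    rw [hlen2] at ht
    by_cases h1 : t = j
    · subst h1
      rw [hfib'_j, hY'card, hc2, getD_set_self (by rw [List.length_set]; exact ht)]
    · by_cases h2 : t = i
      · subst h2
        rw [hfib'_i, Finset.card_sdiff_of_subset (fun q hq => hY'sub q hq),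
          Finset.card_union_of_disjoint hdisj, hXc, hYc, hY'card, hc2,
          getD_set_ne (fun h => h1 h.symm) (by rw [List.length_set]; exact ht),
          getD_set_self ht]
        omega
      · rw [hfib'_o t h2 h1, hcard t ht, hc2,
          getD_set_ne (fun h => h1 h.symm) (by rw [List.length_set]; exact ht),
          getD_set_ne (fun h => h2 h.symm) ht]
  · rw [hlen2, hfib'_o c.length (by omega) (by omega)]
    exact hfree
  · intro p
    rw [hval p]
    simp only [hlen2]
    by_cases hYp : p ∈ Y'
    · -- p is in the new shorter chain; its value is unchanged
      have hpU := hY'sub p hYp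
      have hgp : g p = i ∨ g p = j := by
        rcases Finset.mem_union.mp hpU with h2 | h2
        · exact Or.inl (mem_fib.mp h2)
        · exact Or.inr (mem_fib.mp h2)
      obtain ⟨t, htb, hMt⟩ := hY'mem.mp hYp
      have hg'p : g' p = j := by simp only [hg']; rw [if_pos hYp]
      have hrk : Rk (fib g (g p)) p = (t : ℕ) := by rw [← hMt]; exact hMe_rk t
      rw [wval, wval, hg'p, if_neg (by rcases hgp with h | h <;> omega), if_neg (by omega),
        hfib'_j, hrk]
      have hSsub : ((Finset.univ : Finset (Fin b)).filter (fun u : Fin b => (u : ℕ) < (t : ℕ))).image Me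
          ⊆ Y' := by
        intro q hq
        obtain ⟨u, hu1, hu2⟩ := Finset.mem_image.mp hq
        rw [Finset.mem_filter] at hu1
        apply hY'mem.mpr
        exact ⟨u, by omega, hu2⟩
      have hSlt : ∀ q ∈ ((Finset.univ : Finset (Fin b)).filter
          (fun u : Fin b => (u : ℕ) < (t : ℕ))).image Me, q < p := by
        intro q hq
        obtain ⟨u, hu1, hu2⟩ := Finset.mem_image.mp hq
        rw [Finset.mem_filter] at hu1
        rw [← hu2, ← hMt]
        exact hMemono (by rw [Fin.lt_def]; exact hu1.2)
      have hScard : (((Finset.univ : Finset (Fin b)).filter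
          (fun u : Fin b => (u : ℕ) < (t : ℕ))).image Me).card = (t : ℕ) := by
        rw [Finset.card_image_of_injOn (fun x _ y _ h => hMeinj h),
          card_filter_lt_fin (le_of_lt t.isLt)]
      calc (t : ℕ) = _ := hScard.symm
        _ ≤ Rk Y' p := card_le_Rk hSsub hSlt
    · by_cases hpU : p ∈ fib g i ∪ fib g j
      · -- p goes to the new longer chain
        have hgp : g p = i ∨ g p = j := by
          rcases Finset.mem_union.mp hpU with h2 | h2
          · exact Or.inl (mem_fib.mp h2)
          · exact Or.inr (mem_fib.mp h2)
        have hg'p : g' p = i := by simp only [hg']; rw [if_neg hYp, if_pos hgp]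
        rw [wval, wval, hg'p, if_neg (by rcases hgp with h | h <;> omega), if_neg (by omega),
          hfib'_i]
        -- injection argument
        apply Finset.card_le_card_of_injOn
          (fun q => if hrq : Rk (fib g (g p)) q < b then me ⟨Rk (fib g (g p)) q, hrq⟩ else q)
        · intro q hq
          rw [Finset.mem_coe, Finset.mem_filter] at hq
          obtain ⟨hqF, hqlt⟩ := hq
          have hgq : g q = g p := mem_fib.mp hqF
          by_cases hrq : Rk (fib g (g p)) q < b
          · simp only [dif_pos hrq]
            set u : Fin b := ⟨Rk (fib g (g p)) q, hrq⟩ with hu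
            have hmeq : me u ≤ q := by
              rcases hgp with hgpi | hgpj
              · have hqX : q ∈ fib g i := by rw [← hgpi, ← hgq]; exact mem_fib.mpr rfl
                obtain ⟨t2, ht2, hrt2⟩ := exists_orderIso_eq hXc hqX
                have hval2 : Rk (fib g (g p)) q = Rk (fib g i) q := by rw [hgpi]
                have hcastu : Fin.castLE hbla u = t2 := by
                  apply Fin.ext
                  rw [Fin.coe_castLE]
                  show Rk (fib g (g p)) q = (t2 : ℕ)
                  rw [hval2, hrt2]
                have hqcu : qc u = q := by
                  show qe (Fin.castLE hbla u) = q
                  rw [hcastu]; exact ht2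
                rw [← hqcu]
                exact min_le_left _ _
              · have hqY : q ∈ fib g j := by rw [← hgpj, ← hgq]; exact mem_fib.mpr rfl
                obtain ⟨t2, ht2, hrt2⟩ := exists_orderIso_eq hYc hqY
                have hval2 : Rk (fib g (g p)) q = Rk (fib g j) q := by rw [hgpj]
                have hcastu : u = t2 := by
                  apply Fin.ext
                  show Rk (fib g (g p)) q = (t2 : ℕ)
                  rw [hval2, hrt2]
                have hreu : re u = q := by rw [hcastu]; exact ht2
                rw [← hreu]
                exact min_le_right _ _
            rw [Finset.mem_coe, Finset.mem_filter, Finset.mem_sdiff]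
            exact ⟨⟨hme_mem u, hme_notY' u⟩, lt_of_le_of_lt hmeq hqlt⟩
          · simp only [dif_neg hrq]
            rw [Finset.mem_coe, Finset.mem_filter, Finset.mem_sdiff]
            refine ⟨⟨?_, ?_⟩, hqlt⟩
            · rcases hgp with h2 | h2
              · exact Finset.mem_union_left _ (by rw [← h2, ← hgq]; exact mem_fib.mpr rfl)
              · exact Finset.mem_union_right _ (by rw [← h2, ← hgq]; exact mem_fib.mpr rfl)
            · intro hqY'
              have := hY'rk q hqY'
              rw [hgq] at this
              omega
        · intro q hq q' hq' heq
          dsimp only at heq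
          rw [Finset.coe_filter, Set.mem_setOf_eq] at hq hq'
          obtain ⟨hqF, _⟩ := hq
          obtain ⟨hq'F, _⟩ := hq'
          by_cases hrq : Rk (fib g (g p)) q < b <;> by_cases hrq' : Rk (fib g (g p)) q' < b
          · rw [dif_pos hrq, dif_pos hrq'] at heq
            have hu : (⟨Rk (fib g (g p)) q, hrq⟩ : Fin b) = ⟨Rk (fib g (g p)) q', hrq'⟩ := by
              by_contra hne
              rcases lt_or_gt_of_ne hne with h5 | h5
              · exact absurd heq (ne_of_lt (hmemono h5))
              · exact absurd heq.symm (ne_of_lt (hmemono h5))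
            have : Rk (fib g (g p)) q = Rk (fib g (g p)) q' := congrArg Fin.val hu
            exact rank_eq_inj hqF hq'F this
          · rw [dif_pos hrq, dif_neg hrq'] at heq
            exfalso
            have hgq' : g q' = g p := mem_fib.mp hq'F
            have : Rk (fib g (g (me ⟨Rk (fib g (g p)) q, hrq⟩)))
                (me ⟨Rk (fib g (g p)) q, hrq⟩) = Rk (fib g (g p)) q := by
              rw [hme_rk]
            rw [heq] at this
            rw [hgq'] at this
            omega
          · rw [dif_neg hrq, dif_pos hrq'] at heq
            exfalso
            have hgq : g q = g p := mem_fib.mp hqF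
            have : Rk (fib g (g (me ⟨Rk (fib g (g p)) q', hrq'⟩)))
                (me ⟨Rk (fib g (g p)) q', hrq'⟩) = Rk (fib g (g p)) q' := by
              rw [hme_rk]
            rw [← heq] at this
            rw [hgq] at this
            omega
          · rw [dif_neg hrq, dif_neg hrq'] at heq
            exact heq
      · -- p keeps its value
        have hgpni : g p ≠ i := fun h => hpU (Finset.mem_union_left _ (mem_fib.mpr h))
        have hgpnj : g p ≠ j := fun h => hpU (Finset.mem_union_right _ (mem_fib.mpr h))
        have hg'p : g' p = g p := by
          simp only [hg']
          rw [if_neg (fun h => hpU (hY'sub p h)), if_neg (by tauto)]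
        rw [wval, wval, hg'p]
        by_cases hfr : g p = c.length
        · rw [if_pos hfr, if_pos hfr]
        · rw [if_neg hfr, if_neg hfr, hfib'_o (g p) hgpni hgpnj]

end Stmt9Aux
namespace Stmt9Aux

variable {n : ℕ}

inductive StepR (s : ℕ) : List ℕ × ℕ → List ℕ × ℕ → Prop
  | decr (c : List ℕ) (f j : ℕ) (hj : j < c.length) (hpos : 0 < c.getD j 0)
      (hcs : c.getD j 0 ≤ s) : StepR s (c, f) (c.set j (c.getD j 0 - 1), f + 1)
  | move (c : List ℕ) (f i j : ℕ) (hij : i ≠ j) (hi : i < c.length) (hj : j < c.length)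
      (hba : c.getD j 0 ≤ c.getD i 0) (hpos : 0 < c.getD j 0) :
      StepR s (c, f) ((c.set i (c.getD i 0 + 1)).set j (c.getD j 0 - 1), f)
  | drop (c : List ℕ) (f : ℕ) : StepR s (c ++ [0], f) (c, f)

lemma stair_step {s : ℕ} {cf cf' : List ℕ × ℕ} (h : StepR s cf cf') {w : Fin n → ℕ}
    (hw : Stair n s cf.1 cf.2 w) : ∃ w', Stair n s cf'.1 cf'.2 w' ∧ ∀ p, w p ≤ w' p := by
  cases h with
  | decr c f j hj hpos hcs => exact stair_decr hw hj hpos hcs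
  | move c f i j hij hi hj hba hpos => exact stair_move hw hij hi hj hba hpos
  | drop c f => exact ⟨w, stair_dropzero hw, fun p => le_refl _⟩

lemma stair_reach {s : ℕ} {cf cf' : List ℕ × ℕ}
    (h : Relation.ReflTransGen (StepR s) cf cf') {w : Fin n → ℕ}
    (hw : Stair n s cf.1 cf.2 w) : ∃ w', Stair n s cf'.1 cf'.2 w' ∧ ∀ p, w p ≤ w' p := by
  induction h with
  | refl => exact ⟨w, hw, fun p => le_refl _⟩
  | tail hsteps hstep ih =>
      obtain ⟨w1, hw1, hle1⟩ := ih
      obtain ⟨w2, hw2, hle2⟩ := stair_step hstep hw1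
      exact ⟨w2, hw2, fun p => le_trans (hle1 p) (hle2 p)⟩

lemma sum_eq_sum_getD (c : List ℕ) : c.sum = ∑ t ∈ Finset.range c.length, c.getD t 0 := by
  induction c with
  | nil => simp
  | cons a t ih =>
    rw [List.sum_cons, List.length_cons, Finset.sum_range_succ']
    simp only [List.getD_cons_succ, List.getD_cons_zero]
    omega

lemma sum_set_add (c : List ℕ) {t : ℕ} (ht : t < c.length) (v : ℕ) :
    (c.set t v).sum + c.getD t 0 = c.sum + v := by
  rw [sum_eq_sum_getD, sum_eq_sum_getD, List.length_set]
  have h1 : ∑ u ∈ Finset.range c.length, (c.set t v).getD u 0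
      = v + ∑ u ∈ Finset.range c.length \ {t}, c.getD u 0 := by
    rw [Finset.sum_eq_add_sum_sdiff_singleton_of_mem (Finset.mem_range.mpr ht)
      (fun u => (c.set t v).getD u 0)]
    congr 1
    · exact getD_set_self ht v
    · apply Finset.sum_congr rfl
      intro u hu
      rw [Finset.mem_sdiff, Finset.mem_singleton] at hu
      rw [Finset.mem_range] at hu
      exact getD_set_ne (fun h => hu.2 h.symm) hu.1 v
  have h2 : ∑ u ∈ Finset.range c.length, c.getD u 0
      = c.getD t 0 + ∑ u ∈ Finset.range c.length \ {t}, c.getD u 0 :=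
    Finset.sum_eq_add_sum_sdiff_singleton_of_mem (Finset.mem_range.mpr ht) _
  omega

lemma eq_of_getD {c d : List ℕ} (hlen : d.length = c.length)
    (h : ∀ t, t < c.length → c.getD t 0 = d.getD t 0) : c = d := by
  apply List.ext_getElem hlen.symm
  intro t h1 h2
  have := h t h1
  rwa [List.getD_eq_getElem _ 0 h1, List.getD_eq_getElem _ 0 h2] at this

lemma getD_set_ne' {c : List ℕ} {i t : ℕ} (h : i ≠ t) (v : ℕ) :
    (c.set i v).getD t 0 = c.getD t 0 := by
  by_cases ht : t < c.length
  · exact getD_set_ne h ht v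
  · rw [List.getD_eq_default _ _ (by rw [List.length_set]; omega),
      List.getD_eq_default _ _ (by omega)]

lemma reach_decr {s : ℕ} : ∀ (N : ℕ) (c d : List ℕ) (f : ℕ), d.length = c.length →
    (∀ t, d.getD t 0 ≤ c.getD t 0) → (∀ t, c.getD t 0 ≤ s) → c.sum = d.sum + N →
    Relation.ReflTransGen (StepR s) (c, f) (d, f + N) := by
  intro N
  induction N with
  | zero =>
    intro c d f hlen hle hcs hsum
    have hcd : c = d := by
      apply eq_of_getD hlen
      by_contra hne
      push_neg at hne
      obtain ⟨t, ht, htne⟩ := hne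
      have hstrict : d.getD t 0 < c.getD t 0 := lt_of_le_of_ne (hle t) (fun h => htne h.symm)
      have hlt : d.sum < c.sum := by
        rw [sum_eq_sum_getD c, sum_eq_sum_getD d, hlen]
        apply Finset.sum_lt_sum (fun u _ => hle u)
        exact ⟨t, Finset.mem_range.mpr ht, hstrict⟩
      omega
    rw [hcd]
    exact Relation.ReflTransGen.refl
  | succ N ih =>
    intro c d f hlen hle hcs hsum
    have hex : ∃ t, t < c.length ∧ d.getD t 0 < c.getD t 0 := by
      by_contra hne
      push_neg at hne
      have : ∀ t, t < c.length → c.getD t 0 = d.getD t 0 :=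
        fun t ht => le_antisymm (hne t ht) (hle t)
      have : c = d := eq_of_getD hlen this
      rw [this] at hsum
      omega
    obtain ⟨t, ht, hstrict⟩ := hex
    have hstep : StepR s (c, f) (c.set t (c.getD t 0 - 1), f + 1) :=
      StepR.decr c f t ht (by omega) (hcs t)
    have hsum2 : (c.set t (c.getD t 0 - 1)).sum + c.getD t 0 = c.sum + (c.getD t 0 - 1) :=
      sum_set_add c ht _
    have hrest : Relation.ReflTransGen (StepR s) (c.set t (c.getD t 0 - 1), f + 1)
        (d, (f + 1) + N) := by
      apply ih
      · rw [hlen, List.length_set]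
      · intro u
        by_cases hu : u = t
        · subst hu
          rw [getD_set_self ht]
          omega
        · rw [getD_set_ne' (fun h => hu h.symm)]
          exact hle u
      · intro u
        by_cases hu : u = t
        · subst hu
          rw [getD_set_self ht]
          have := hcs u
          omega
        · rw [getD_set_ne' (fun h => hu h.symm)]
          exact hcs u
      · omega
    have : f + 1 + N = f + (N + 1) := by omega
    rw [this] at hrest
    exact Relation.ReflTransGen.head hstep hrest

end Stmt9Aux
namespace Stmt9Aux

/-- prefix sums via `getD` -/
def PS (c : List ℕ) (t : ℕ) : ℕ := ∑ u ∈ Finset.range t, c.getD u 0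

lemma PS_succ (c : List ℕ) (t : ℕ) : PS c (t + 1) = PS c t + c.getD t 0 :=
  Finset.sum_range_succ _ t

lemma PS_full {c : List ℕ} {t : ℕ} (h : c.length ≤ t) : PS c t = c.sum := by
  rw [sum_eq_sum_getD, PS]
  symm
  apply Finset.sum_subset
  · exact Finset.range_subset_range.mpr h
  · intro x _ hx
    rw [Finset.mem_range] at hx
    exact List.getD_eq_default _ _ (by omega)

lemma PS_set_le {c : List ℕ} {u t : ℕ} (h : t ≤ u) (v : ℕ) : PS (c.set u v) t = PS c t := by
  apply Finset.sum_congr rfl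
  intro x hx
  rw [Finset.mem_range] at hx
  exact getD_set_ne' (by omega) v

lemma PS_set_gt {c : List ℕ} {u t : ℕ} (hu : u < c.length) (h : u < t) (v : ℕ) :
    PS (c.set u v) t + c.getD u 0 = PS c t + v := by
  have h1 : PS (c.set u v) t
      = v + ∑ x ∈ Finset.range t \ {u}, c.getD x 0 := by
    rw [PS, Finset.sum_eq_add_sum_sdiff_singleton_of_mem (Finset.mem_range.mpr h)
      (fun x => (c.set u v).getD x 0)]
    congr 1
    · exact getD_set_self hu v
    · apply Finset.sum_congr rfl
      intro x hx
      rw [Finset.mem_sdiff, Finset.mem_singleton] at hx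
      exact getD_set_ne' (fun hh => hx.2 hh.symm) v
  have h2 : PS c t = c.getD u 0 + ∑ x ∈ Finset.range t \ {u}, c.getD x 0 :=
    Finset.sum_eq_add_sum_sdiff_singleton_of_mem (Finset.mem_range.mpr h) _
  omega

lemma reach_dom {s : ℕ} : ∀ (N : ℕ) (c d : List ℕ) (f : ℕ),
    d.length = c.length →
    (∀ u v, u ≤ v → c.getD v 0 ≤ c.getD u 0) →
    (∀ u v, u ≤ v → d.getD v 0 ≤ d.getD u 0) →
    c.sum = d.sum →
    (∀ t, PS c t ≤ PS d t) →
    (∑ t ∈ Finset.range (c.length + 1), (PS d t - PS c t)) ≤ N →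
    Relation.ReflTransGen (StepR s) (c, f) (d, f) := by
  intro N
  induction N with
  | zero =>
    intro c d f hlen hsc hsd hsum hPS hM
    have hPSeq : ∀ t, t < c.length + 1 → PS d t = PS c t := by
      intro t ht
      have h1 : PS d t - PS c t = 0 := by
        have := Finset.sum_eq_zero_iff.mp (le_antisymm hM (Nat.zero_le _))
        exact this t (Finset.mem_range.mpr ht)
      have := hPS t
      omega
    have : c = d := by
      apply eq_of_getD hlen
      intro t ht
      have h1 := hPSeq t (by omega)
      have h2 := hPSeq (t + 1) (by omega)
      have h3 := PS_succ c t
      have h4 := PS_succ d t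
      omega
    rw [this]
  | succ N ih =>
    intro c d f hlen hsc hsd hsum hPS hM
    by_cases hcd : c = d
    · rw [hcd]
    -- find the first differing index
    have hex : ∃ u, c.getD u 0 ≠ d.getD u 0 := by
      by_contra hne
      push_neg at hne
      exact hcd (eq_of_getD hlen (fun t _ => hne t))
    set i := Nat.find hex with hidef
    have hine : c.getD i 0 ≠ d.getD i 0 := Nat.find_spec hex
    have himin : ∀ u, u < i → c.getD u 0 = d.getD u 0 := by
      intro u hu
      by_contra hne
      exact Nat.find_min hex hu hne
    have hilen : i < c.length := by
      by_contra hle2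
      push_neg at hle2
      apply hine
      rw [List.getD_eq_default _ _ hle2, List.getD_eq_default _ _ (by omega)]
    have hPSi : PS c i = PS d i := by
      apply Finset.sum_congr rfl
      intro u hu
      rw [Finset.mem_range] at hu
      exact himin u hu
    have hci : c.getD i 0 < d.getD i 0 := by
      have h1 := hPS (i + 1)
      have h2 := PS_succ c i
      have h3 := PS_succ d i
      omega
    -- find the first balancing point after i
    have hQex : ∃ t, i < t ∧ PS c t = PS d t := by
      refine ⟨c.length, hilen, ?_⟩
      rw [PS_full (le_refl _), PS_full (le_of_eq hlen), hsum]
    set j := Nat.find hQex with hjdef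
    have hjspec : i < j ∧ PS c j = PS d j := Nat.find_spec hQex
    have hjmin : ∀ t, t < j → i < t → PS c t < PS d t := by
      intro t ht hit
      have := Nat.find_min hQex ht
      push_neg at this
      exact lt_of_le_of_ne (hPS t) (this hit)
    have hij2 : i + 2 ≤ j := by
      rcases Nat.lt_or_ge (i + 1) j with h | h
      · omega
      · exfalso
        have h1 : j = i + 1 := by omega
        have h2 := PS_succ c i
        have h3 := PS_succ d i
        have h4 := hjspec.2
        rw [h1] at h4
        omega
    have hj1len : j - 1 < c.length := by
      by_contra hge
      push_neg at hge
      have h1 : PS c (j - 1) = c.sum := PS_full (by omega)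
      have h2 : PS d (j - 1) = d.sum := PS_full (by omega)
      have := hjmin (j - 1) (by omega) (by omega)
      omega
    have hcj1 : d.getD (j - 1) 0 < c.getD (j - 1) 0 := by
      have h1 := hjmin (j - 1) (by omega) (by omega)
      have h2 := PS_succ c (j - 1)
      have h3 := PS_succ d (j - 1)
      have h4 : j - 1 + 1 = j := by omega
      rw [h4] at h2 h3
      have h5 := hjspec.2
      omega
    have hcj : c.getD j 0 ≤ d.getD j 0 := by
      have h1 := hPS (j + 1)
      have h2 := PS_succ c j
      have h3 := PS_succ d j
      have h4 := hjspec.2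
      omega
    have hinej : i ≠ j - 1 := by omega
    set c' := (c.set i (c.getD i 0 + 1)).set (j - 1) (c.getD (j - 1) 0 - 1) with hc'def
    have hc'len : c'.length = c.length := by
      rw [hc'def, List.length_set, List.length_set]
    have hstep : StepR s (c, f) (c', f) :=
      StepR.move c f i (j - 1) hinej hilen hj1len
        (hsc i (j - 1) (by omega)) (by omega)
    have hc'getD : ∀ x, c'.getD x 0 = if x = i then c.getD i 0 + 1
        else if x = j - 1 then c.getD (j - 1) 0 - 1 else c.getD x 0 := by
      intro x
      by_cases hxi : x = i
      · subst hxi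
        rw [if_pos rfl, hc'def, getD_set_ne' (fun hh => hinej hh.symm),
          getD_set_self hilen]
      · rw [if_neg hxi]
        by_cases hxj : x = j - 1
        · subst hxj
          rw [if_pos rfl, hc'def, getD_set_self (by rw [List.length_set]; exact hj1len)]
        · rw [if_neg hxj, hc'def, getD_set_ne' (fun hh => hxj hh.symm),
            getD_set_ne' (fun hh => hxi hh.symm)]
    have hsortc' : ∀ u v, u ≤ v → c'.getD v 0 ≤ c'.getD u 0 := by
      intro u v huv
      rw [hc'getD u, hc'getD v]
      by_cases hvi : v = i
      · subst hvi
        rw [if_pos rfl]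
        by_cases hui : u = i
        · rw [if_pos hui]
        · rw [if_neg hui, if_neg (by omega : ¬ u = j - 1)]
          have h1 : c.getD u 0 = d.getD u 0 := himin u (by omega)
          have h2 : d.getD i 0 ≤ d.getD u 0 := hsd u i (by omega)
          omega
      · rw [if_neg hvi]
        by_cases hvj : v = j - 1
        · subst hvj
          rw [if_pos rfl]
          by_cases hui : u = i
          · rw [if_pos hui]
            have := hsc i (j - 1) (by omega)
            omega
          · rw [if_neg hui]
            by_cases huj : u = j - 1
            · rw [if_pos huj]
            · rw [if_neg huj]
              have := hsc u (j - 1) (by omega)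
              omega
        · rw [if_neg hvj]
          by_cases hui : u = i
          · rw [if_pos hui]
            have := hsc i v (by omega)
            omega
          · rw [if_neg hui]
            by_cases huj : u = j - 1
            · rw [if_pos huj]
              have hvj2 : j ≤ v := by omega
              have h1 := hsc j v hvj2
              have h2 : d.getD j 0 ≤ d.getD (j - 1) 0 := hsd (j - 1) j (by omega)
              omega
            · rw [if_neg huj]
              exact hsc u v huv
    have hsum' : c'.sum = c.sum := by
      have h1 : (c.set i (c.getD i 0 + 1)).sum + c.getD i 0 = c.sum + (c.getD i 0 + 1) :=
        sum_set_add c hilen _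
      have h2 : c'.sum + (c.set i (c.getD i 0 + 1)).getD (j - 1) 0
          = (c.set i (c.getD i 0 + 1)).sum + (c.getD (j - 1) 0 - 1) := by
        rw [hc'def]
        exact sum_set_add _ (by rw [List.length_set]; exact hj1len) _
      rw [getD_set_ne' hinej] at h2
      omega
    have hPSc' : ∀ t, (t ≤ i → PS c' t = PS c t) ∧
        (i < t → t ≤ j - 1 → PS c' t = PS c t + 1) ∧ (j - 1 < t → PS c' t = PS c t) := by
      intro t
      refine ⟨?_, ?_, ?_⟩
      · intro ht
        rw [hc'def, PS_set_le (by omega), PS_set_le ht]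
      · intro ht1 ht2
        have h1 : PS c' t = PS (c.set i (c.getD i 0 + 1)) t := by
          rw [hc'def]
          exact PS_set_le ht2 _
        have h2 : PS (c.set i (c.getD i 0 + 1)) t + c.getD i 0 = PS c t + (c.getD i 0 + 1) :=
          PS_set_gt hilen (by omega) _
        omega
      · intro ht
        have h1 : PS c' t + (c.set i (c.getD i 0 + 1)).getD (j - 1) 0
            = PS (c.set i (c.getD i 0 + 1)) t + (c.getD (j - 1) 0 - 1) :=
          PS_set_gt (by rw [List.length_set]; exact hj1len) (by omega) _
        have h2 : PS (c.set i (c.getD i 0 + 1)) t + c.getD i 0 = PS c t + (c.getD i 0 + 1) :=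
          PS_set_gt hilen (by omega) _
        rw [getD_set_ne' hinej] at h1
        omega
    have hPS' : ∀ t, PS c' t ≤ PS d t := by
      intro t
      obtain ⟨ha1, ha2, ha3⟩ := hPSc' t
      rcases Nat.lt_or_ge i t with h | h
      · rcases Nat.lt_or_ge (j - 1) t with h2 | h2
        · rw [ha3 h2]; exact hPS t
        · rw [ha2 h h2]
          exact hjmin t (by omega) h
      · rw [ha1 h]; exact hPS t
    have hMlt : (∑ t ∈ Finset.range (c'.length + 1), (PS d t - PS c' t))
        < ∑ t ∈ Finset.range (c.length + 1), (PS d t - PS c t) := by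
      rw [hc'len]
      apply Finset.sum_lt_sum
      · intro t _
        obtain ⟨ha1, ha2, ha3⟩ := hPSc' t
        rcases Nat.lt_or_ge i t with h | h
        · rcases Nat.lt_or_ge (j - 1) t with h2 | h2
          · rw [ha3 h2]
          · rw [ha2 h h2]; omega
        · rw [ha1 h]
      · refine ⟨i + 1, Finset.mem_range.mpr (by omega), ?_⟩
        obtain ⟨ha1, ha2, ha3⟩ := hPSc' (i + 1)
        rw [ha2 (by omega) (by omega)]
        have := hjmin (i + 1) (by omega) (by omega)
        omega
    have hrest : Relation.ReflTransGen (StepR s) (c', f) (d, f) := by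
      apply ih c' d f (by rw [hc'len]; exact hlen) hsortc' hsd (by rw [hsum']; exact hsum) hPS'
      omega
    exact Relation.ReflTransGen.head hstep hrest

end Stmt9Aux
namespace Stmt9Aux

lemma conjList_eq_sum (L : List ℕ) (t : ℕ) :
    conjList L t = ∑ i ∈ Finset.range L.length, if t ≤ L.getD i 0 then 1 else 0 := by
  induction L with
  | nil => simp [conjList]
  | cons x tl ih =>
    rw [conjList, List.filter_cons]
    rw [List.length_cons, Finset.sum_range_succ']
    simp only [List.getD_cons_succ, List.getD_cons_zero]
    by_cases h : t ≤ x
    · rw [if_pos (by simpa using h), if_pos h, List.length_cons]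
      rw [conjList] at ih
      omega
    · rw [if_neg (by simpa using h), if_neg h]
      rw [conjList] at ih
      omega

lemma conjList_cons (x : ℕ) (tl : List ℕ) (t : ℕ) :
    conjList (x :: tl) t = conjList tl t + (if t ≤ x then 1 else 0) := by
  rw [conjList, conjList, List.filter_cons]
  by_cases h : t ≤ x
  · rw [if_pos (by simpa using h), if_pos h, List.length_cons]
  · rw [if_neg (by simpa using h), if_neg h]
    omega

lemma conjList_le_length (L : List ℕ) (t : ℕ) : conjList L t ≤ L.length :=
  List.length_filter_le _ _

lemma conjList_anti (L : List ℕ) {t t' : ℕ} (h : t ≤ t') : conjList L t' ≤ conjList L t := by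
  rw [conjList_eq_sum, conjList_eq_sum]
  apply Finset.sum_le_sum
  intro i _
  by_cases h1 : t' ≤ L.getD i 0
  · rw [if_pos h1, if_pos (le_trans h h1)]
  · rw [if_neg h1]
    omega

lemma length_le_of_getD_le {L M : List ℕ} (hpos : ∀ x ∈ L, 0 < x)
    (hle : ∀ i, L.getD i 0 ≤ M.getD i 0) : L.length ≤ M.length := by
  by_contra h
  push_neg at h
  have h1 : L.getD M.length 0 > 0 := by
    rw [List.getD_eq_getElem _ 0 h]
    exact hpos _ (List.getElem_mem h)
  have h2 : M.getD M.length 0 = 0 := List.getD_eq_default _ 0 (le_refl _)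
  have := hle M.length
  omega

lemma conj_le {L M : List ℕ} {t : ℕ} (hpos : ∀ x ∈ L, 0 < x)
    (hle : ∀ i, L.getD i 0 ≤ M.getD i 0) : conjList L t ≤ conjList M t := by
  have hlen := length_le_of_getD_le hpos hle
  rw [conjList_eq_sum, conjList_eq_sum]
  calc ∑ i ∈ Finset.range L.length, (if t ≤ L.getD i 0 then 1 else 0)
      ≤ ∑ i ∈ Finset.range L.length, (if t ≤ M.getD i 0 then 1 else 0) := by
        apply Finset.sum_le_sum
        intro i _
        by_cases h1 : t ≤ L.getD i 0
        · rw [if_pos h1, if_pos (le_trans h1 (hle i))]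
        · rw [if_neg h1]; omega
    _ ≤ ∑ i ∈ Finset.range M.length, (if t ≤ M.getD i 0 then 1 else 0) := by
        apply Finset.sum_le_sum_of_subset_of_nonneg
          (Finset.range_subset_range.mpr hlen)
        intro i _ _
        positivity

lemma conj_partial (L : List ℕ) (t : ℕ) :
    ∑ u ∈ Finset.range t, conjList L (u + 1) = (L.map (fun x => min x t)).sum := by
  induction L with
  | nil => simp [conjList]
  | cons x tl ih =>
    simp only [List.map_cons, List.sum_cons]
    have h1 : ∀ u, conjList (x :: tl) (u + 1) = conjList tl (u + 1)
        + (if u + 1 ≤ x then 1 else 0) := fun u => conjList_cons x tl (u + 1)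
    rw [Finset.sum_congr rfl (fun u _ => h1 u), Finset.sum_add_distrib, ih]
    have h2 : ∑ u ∈ Finset.range t, (if u + 1 ≤ x then (1 : ℕ) else 0) = min x t := by
      rw [← Finset.card_filter]
      have h3 : (Finset.range t).filter (fun u => u + 1 ≤ x) = Finset.range (min x t) := by
        ext u
        simp only [Finset.mem_filter, Finset.mem_range]
        omega
      rw [h3, Finset.card_range]
    omega

lemma sum_conj {L : List ℕ} {m : ℕ} (h : ∀ x ∈ L, x ≤ m) :
    ∑ u ∈ Finset.range m, conjList L (u + 1) = L.sum := by
  rw [conj_partial]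
  congr 1
  rw [List.map_congr_left (fun x hx => min_eq_left (h x hx))]
  exact List.map_id L

lemma sub_claimA (t : ℕ) : ∀ (Z : List ℕ) (j : ℕ),
    (Z.take j).sum ≤ (Z.map (fun x => x - t)).sum + j * t := by
  intro Z
  induction Z with
  | nil => intro j; simp
  | cons x tl ih =>
    intro j
    match j with
    | 0 => simp
    | (j+1) =>
      rw [List.take_succ_cons, List.sum_cons, List.map_cons, List.sum_cons]
      have := ih j
      have hx : x ≤ (x - t) + t := by omega
      calc x + (tl.take j).sum ≤ x + ((tl.map (fun x => x - t)).sum + j * t) := by omega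
        _ ≤ (x - t) + (tl.map (fun x => x - t)).sum + (j + 1) * t := by ring_nf; omega

lemma sub_claimB {L : List ℕ} (hs : L.Pairwise (· ≥ ·)) (t : ℕ) :
    ∃ jj, (L.take jj).sum = (L.map (fun x => x - t)).sum + jj * t := by
  induction L with
  | nil => exact ⟨0, by simp⟩
  | cons x tl ih =>
    have hs' : tl.Pairwise (· ≥ ·) := hs.of_cons
    by_cases h : t < x
    · obtain ⟨jj, hjj⟩ := ih hs'
      refine ⟨jj + 1, ?_⟩
      rw [List.take_succ_cons, List.sum_cons, List.map_cons, List.sum_cons, hjj]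
      ring_nf
      omega
    · refine ⟨0, ?_⟩
      have hall : ∀ y ∈ (x :: tl).map (fun x => x - t), y = 0 := by
        intro y hy
        obtain ⟨z, hz, hzy⟩ := List.mem_map.mp hy
        have hzx : z ≤ x := by
          rcases List.mem_cons.mp hz with h2 | h2
          · omega
          · exact List.rel_of_pairwise_cons hs h2
        omega
      rw [List.sum_eq_zero hall]
      simp

lemma dom_transfer {L M : List ℕ} (hsL : L.Pairwise (· ≥ ·))
    (hpre : ∀ i, (L.take i).sum ≤ (M.take i).sum) (t : ℕ) :
    (L.map (fun x => x - t)).sum ≤ (M.map (fun x => x - t)).sum := by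
  obtain ⟨jj, hjj⟩ := sub_claimB hsL t
  have h1 := hpre jj
  have h2 := sub_claimA t M jj
  omega

lemma min_sub_split (L : List ℕ) (t : ℕ) :
    (L.map (fun x => min x t)).sum + (L.map (fun x => x - t)).sum = L.sum := by
  induction L with
  | nil => simp
  | cons x tl ih =>
    simp only [List.map_cons, List.sum_cons]
    have : min x t + (x - t) = x := by omega
    omega

lemma dom_conj_prefix {L M : List ℕ} (hsL : L.Pairwise (· ≥ ·))
    (hsum : L.sum = M.sum) (hpre : ∀ i, (L.take i).sum ≤ (M.take i).sum) (t : ℕ) :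
    ∑ u ∈ Finset.range t, conjList M (u + 1) ≤ ∑ u ∈ Finset.range t, conjList L (u + 1) := by
  rw [conj_partial, conj_partial]
  have h1 := dom_transfer hsL hpre t
  have h2 := min_sub_split L t
  have h3 := min_sub_split M t
  omega

lemma getD_mapRange (F : ℕ → ℕ) (m t : ℕ) :
    ((List.range m).map F).getD t 0 = if t < m then F t else 0 := by
  by_cases h : t < m
  · rw [if_pos h, List.getD_eq_getElem _ 0 (by simpa using h), List.getElem_map,
      List.getElem_range]
  · rw [if_neg h, List.getD_eq_default _ 0 (by simpa using h)]

lemma sum_mapRange (F : ℕ → ℕ) (m : ℕ) :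
    ((List.range m).map F).sum = ∑ u ∈ Finset.range m, F u := by
  induction m with
  | zero => simp
  | succ m ih =>
    rw [List.range_succ, List.map_append, List.sum_append, Finset.sum_range_succ, ih]
    simp

lemma reach_drops {s : ℕ} (F : ℕ → ℕ) (f : ℕ) : ∀ (m l : ℕ), l ≤ m →
    (∀ t, l ≤ t → F t = 0) →
    Relation.ReflTransGen (StepR s) (((List.range m).map F), f) (((List.range l).map F), f) := by
  intro m
  induction m with
  | zero =>
    intro l hl _
    have : l = 0 := by omega
    subst this
    exact Relation.ReflTransGen.refl
  | succ m ih =>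
    intro l hl hF
    by_cases hlm : l = m + 1
    · subst hlm; exact Relation.ReflTransGen.refl
    · have hlm' : l ≤ m := by omega
      have hsplit : (List.range (m + 1)).map F = (List.range m).map F ++ [0] := by
        rw [List.range_succ, List.map_append, List.map_singleton, hF m (by omega)]
      have hstep : StepR s (((List.range (m + 1)).map F), f) (((List.range m).map F), f) := by
        rw [hsplit]
        exact StepR.drop _ f
      exact Relation.ReflTransGen.head hstep (ih l hlm' hF)

lemma le_head_of_sorted {L : List ℕ} (hs : L.Pairwise (· ≥ ·)) :
    ∀ x ∈ L, x ≤ L.getD 0 0 := by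
  intro x hx
  match L with
  | [] => exact absurd hx (List.not_mem_nil)
  | a :: tl =>
    rcases List.mem_cons.mp hx with h | h
    · subst h; rfl
    · exact List.rel_of_pairwise_cons hs h

end Stmt9Aux
namespace Stmt9Aux

lemma take_one_sum (L : List ℕ) : (L.take 1).sum = L.getD 0 0 := by
  cases L <;> simp

lemma stair_cast {s : ℕ} {c : List ℕ} {f : ℕ} {n1 : ℕ} {v : Fin n1 → ℕ}
    (hst : Stair n1 s c f v) (w' : List ℕ) (hlen : w'.length = n1)
    (hget : ∀ p : Fin w'.length, w'.get p = v (Fin.cast hlen p)) :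
    Stair w'.length s c f w'.get := by
  subst hlen
  have hv : w'.get = v := funext fun p => hget p
  rw [hv]
  exact hst

end Stmt9Aux

/-- If `λ ⊢ h` and `μ ⊢ k` with `h ≤ k ≤ n`, and either `h = k` with
`λ ≤_dom μ` or `h < k` with `λ ⊆ μ`, then `C_{n,μ,s} ⊆ C_{n,λ,s}`. -/
theorem stmt9 (h k n s : ℕ) (hh : 0 < h) (hs : 0 < s) (hhk : h ≤ k) (hkn : k ≤ n)
    (L M : List ℕ) (hL : IsPartitionOf h s L) (hM : IsPartitionOf k s M)
    (hcase : (h = k ∧ ∀ i : ℕ, (L.take i).sum ≤ (M.take i).sum) ∨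
      (h < k ∧ ∀ i : ℕ, L.getD i 0 ≤ M.getD i 0)) :
    Cset n k s M ⊆ Cset n h s L := by
  intro al hal
  obtain ⟨w, hshuf, hwlen, hle⟩ := hal
  obtain ⟨hsortL, hposL, hsumL, hlenL⟩ := hL
  obtain ⟨hsortM, hposM, hsumM, hlenM⟩ := hM
  set m1 := M.getD 0 0 with hm1
  set l1 := L.getD 0 0 with hl1
  set cM := (List.range m1).map (fun t => conjList M (t + 1)) with hcM
  set cL := (List.range l1).map (fun t => conjList L (t + 1)) with hcL
  set dM := (List.range m1).map (fun t => conjList L (t + 1)) with hdM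
  have hMbd : ∀ x ∈ M, x ≤ m1 := Stmt9Aux.le_head_of_sorted hsortM
  have hLbd : ∀ x ∈ L, x ≤ l1 := Stmt9Aux.le_head_of_sorted hsortL
  have hl1m1 : l1 ≤ m1 := by
    rcases hcase with ⟨heq, hdom⟩ | ⟨hlt, hcont⟩
    · have := hdom 1
      rw [Stmt9Aux.take_one_sum, Stmt9Aux.take_one_sum] at this
      exact this
    · exact hcont 0
  have hLbdm : ∀ x ∈ L, x ≤ m1 := fun x hx => le_trans (hLbd x hx) hl1m1
  -- identify the staircase lists
  have hstM : staircaseLists n k s M = cM.map List.range ++ [List.replicate (n - k) (s - 1)] := by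
    rw [hcM, List.map_map]
    rfl
  have hstL : staircaseLists n h s L = cL.map List.range ++ [List.replicate (n - h) (s - 1)] := by
    rw [hcL, List.map_map]
    rfl
  rw [hstM] at hshuf
  have hstair : Stmt9Aux.Stair w.length s cM (n - k) w.get :=
    (Stmt9Aux.isShuffle_iff_stair s cM (n - k) w).mp hshuf
  -- sums
  have hsum_cM : cM.sum = k := by
    rw [hcM, Stmt9Aux.sum_mapRange, Stmt9Aux.sum_conj hMbd, hsumM]
  have hsum_dM : dM.sum = h := by
    rw [hdM, Stmt9Aux.sum_mapRange, Stmt9Aux.sum_conj hLbdm, hsumL]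
  have hconjL0 : ∀ t, l1 ≤ t → conjList L (t + 1) = 0 := by
    intro t ht
    rw [conjList, List.length_eq_zero_iff]
    rw [List.filter_eq_nil_iff]
    intro x hx
    simp only [decide_eq_true_eq]
    have := hLbd x hx
    omega
  -- reach from (cM, n-k) to (dM, n-h)
  have hreach1 : Relation.ReflTransGen (Stmt9Aux.StepR s) (cM, n - k) (dM, n - h) := by
    rcases hcase with ⟨heq, hdom⟩ | ⟨hlt, hcont⟩
    · -- dominance case
      have hnkh : n - k = n - h := by omega
      rw [← hnkh]
      have hsort_cM : ∀ u v, u ≤ v → cM.getD v 0 ≤ cM.getD u 0 := by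
        intro u v huv
        rw [hcM, Stmt9Aux.getD_mapRange, Stmt9Aux.getD_mapRange]
        by_cases hv : v < m1
        · rw [if_pos hv, if_pos (by omega)]
          exact Stmt9Aux.conjList_anti M (by omega)
        · rw [if_neg hv]
          exact Nat.zero_le _
      have hsort_dM : ∀ u v, u ≤ v → dM.getD v 0 ≤ dM.getD u 0 := by
        intro u v huv
        rw [hdM, Stmt9Aux.getD_mapRange, Stmt9Aux.getD_mapRange]
        by_cases hv : v < m1
        · rw [if_pos hv, if_pos (by omega)]
          exact Stmt9Aux.conjList_anti L (by omega)
        · rw [if_neg hv]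
          exact Nat.zero_le _
      have hPSle : ∀ t, Stmt9Aux.PS cM t ≤ Stmt9Aux.PS dM t := by
        intro t
        rcases le_or_gt t m1 with ht | ht
        · have e1 : Stmt9Aux.PS cM t = ∑ u ∈ Finset.range t, conjList M (u + 1) := by
            apply Finset.sum_congr rfl
            intro u hu
            rw [Finset.mem_range] at hu
            rw [hcM, Stmt9Aux.getD_mapRange, if_pos (by omega)]
          have e2 : Stmt9Aux.PS dM t = ∑ u ∈ Finset.range t, conjList L (u + 1) := by
            apply Finset.sum_congr rfl
            intro u hu
            rw [Finset.mem_range] at hu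
            rw [hdM, Stmt9Aux.getD_mapRange, if_pos (by omega)]
          rw [e1, e2]
          exact Stmt9Aux.dom_conj_prefix hsortL (by rw [hsumL, hsumM, heq]) hdom t
        · have e1 : Stmt9Aux.PS cM t = cM.sum :=
            Stmt9Aux.PS_full (by rw [hcM, List.length_map, List.length_range]; omega)
          have e2 : Stmt9Aux.PS dM t = dM.sum :=
            Stmt9Aux.PS_full (by rw [hdM, List.length_map, List.length_range]; omega)
          rw [e1, e2, hsum_cM, hsum_dM]
          omega
      apply Stmt9Aux.reach_dom
        (∑ t ∈ Finset.range (cM.length + 1), (Stmt9Aux.PS dM t - Stmt9Aux.PS cM t))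
        cM dM (n - k)
      · rw [hcM, hdM]; simp
      · exact hsort_cM
      · exact hsort_dM
      · rw [hsum_cM, hsum_dM]; omega
      · exact hPSle
      · exact le_refl _
    · -- containment case
      have hnkh : (n - k) + (k - h) = n - h := by omega
      rw [← hnkh]
      apply Stmt9Aux.reach_decr (k - h) cM dM (n - k)
      · rw [hcM, hdM]; simp
      · intro t
        rw [hcM, hdM, Stmt9Aux.getD_mapRange, Stmt9Aux.getD_mapRange]
        by_cases htm : t < m1
        · rw [if_pos htm, if_pos htm]
          exact Stmt9Aux.conj_le hposL hcont
        · rw [if_neg htm, if_neg htm]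
      · intro t
        rw [hcM, Stmt9Aux.getD_mapRange]
        by_cases htm : t < m1
        · rw [if_pos htm]
          exact le_trans (Stmt9Aux.conjList_le_length M (t + 1)) hlenM
        · rw [if_neg htm]
          exact Nat.zero_le _
      · rw [hsum_cM, hsum_dM]; omega
  have hreach2 : Relation.ReflTransGen (Stmt9Aux.StepR s) (dM, n - h) (cL, n - h) := by
    rw [hdM, hcL]
    exact Stmt9Aux.reach_drops _ (n - h) m1 l1 hl1m1 hconjL0
  have hreach := Relation.ReflTransGen.trans hreach1 hreach2
  obtain ⟨w'fun, hstair2, hmono⟩ := Stmt9Aux.stair_reach hreach hstair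
  set w' := List.ofFn w'fun with hw'
  have hlen' : w'.length = w.length := by rw [hw', List.length_ofFn]
  have hstair3 : Stmt9Aux.Stair w'.length s cL (n - h) w'.get := by
    apply Stmt9Aux.stair_cast hstair2 w' hlen'
    intro p
    exact List.get_ofFn w'fun p
  have hshuf' : IsShuffle (cL.map List.range ++ [List.replicate (n - h) (s - 1)]) w' :=
    (Stmt9Aux.isShuffle_iff_stair s cL (n - h) w').mpr hstair3
  rw [← hstL] at hshuf'
  refine ⟨w', hshuf', by rw [hlen', hwlen], ?_⟩
  intro i
  have hi : (i : ℕ) < w.length := by rw [hwlen]; exact i.isLt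
  have hi' : (i : ℕ) < w'.length := by rw [hlen']; exact hi
  have e1 : w.getD (i : ℕ) 0 = w.get ⟨i, hi⟩ := List.getD_eq_getElem w 0 hi
  have e2 : w'.getD (i : ℕ) 0 = w'.get ⟨i, hi'⟩ := List.getD_eq_getElem w' 0 hi'
  have e3 : w'.get ⟨i, hi'⟩ = w'fun ⟨i, hi⟩ := List.get_ofFn w'fun ⟨i, hi'⟩
  calc al i ≤ w.getD (i : ℕ) 0 := hle i
    _ = w.get ⟨i, hi⟩ := e1
    _ ≤ w'fun ⟨i, hi⟩ := hmono ⟨i, hi⟩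
    _ = w'.get ⟨i, hi'⟩ := e3.symm
    _ = w'.getD (i : ℕ) 0 := e2.symm
end

section
/- Let d and m be positive integers, let i ≥ 0 be an integer, and let S ⊆ {x_1,…,x_{n−1}} with |S| = m. Then x_n^i · e_d(S) ∈ x_n^{i+1}·ℚ[x_1,…,x_n] + I_{n,λ,s} in each of the following cases: (a) d > m + 1 − p^n_{m+1}(λ); (b) d = m + 1 − p^n_{m+1}(λ) and d + i > m − p^n_m(λ); (c) i < ℓ(λ) and d > m − p^{n−1}_m(λ^{(i)}); (d) ℓ(λ) ≤ i ≤ s−1, k < n, and d > m − p^{n−1}_m(λ). -/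
open MvPolynomial

/-- `λ^{(i)}`: subtract one from the `(i+1)`-st part (`i` 0-indexed), re-sort into
weakly decreasing order, and drop any zero part. -/
def reduce (L : List ℕ) (i : ℕ) : List ℕ :=
  (List.insertionSort (· ≥ ·) (L.set i (L.getD i 0 - 1))).filter fun x => 0 < x

def reduceStep (L : List ℕ) (i : ℕ) : List ℕ := if i < L.length then reduce L i else L

def reduceSeq : List ℕ → List ℕ → List ℕ
  | L, [] => L
  | L, i :: rest => reduceSeq (reduceStep L i) rest

/-- `λ^{(I)}` where `I = (i_1 < ⋯ < i_j)` enumerates the finite set `T`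
(the recursion processes `i_j` first, i.e. the entries in decreasing order). -/
def lamI (L : List ℕ) (T : Finset ℕ) : List ℕ := reduceSeq L ((T.sort (· ≤ ·)).reverse)

/-! ### Auxiliary lemmas -/

lemma esym_insert {n : ℕ} (S : Finset (Fin n)) (a : Fin n) (ha : a ∉ S) (d : ℕ) :
    esymF (insert a S) (d + 1) = esymF S (d + 1) + X a * esymF S d := by
  unfold esymF
  rw [Finset.powersetCard_succ_insert ha, Finset.sum_union, Finset.sum_image, Finset.mul_sum]
  · congr 1
    refine Finset.sum_congr rfl fun T hT => ?_
    rw [Finset.mem_powersetCard] at hT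
    rw [Finset.prod_insert (fun h => ha (hT.1 h))]
  · intro T hT U hU hin
    rw [Finset.mem_coe, Finset.mem_powersetCard] at hT hU
    have h1 : a ∉ T := fun h => ha (hT.1 h)
    have h2 : a ∉ U := fun h => ha (hU.1 h)
    rw [← Finset.erase_insert h1, ← Finset.erase_insert h2, hin]
  · rw [Finset.disjoint_left]
    intro T hT hT2
    rw [Finset.mem_powersetCard] at hT
    simp only [Finset.mem_image] at hT2
    obtain ⟨U, hU, rfl⟩ := hT2
    exact ha (hT.1 (Finset.mem_insert_self a U))

lemma gen_mem {n s : ℕ} {L : List ℕ} {S : Finset (Fin n)} {d : ℕ}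
    (h : S.card - pcal L n S.card < d) : esymF S d ∈ IdealI n s L :=
  Ideal.subset_span (Or.inr ⟨S, d, h, rfl⟩)

lemma Icc_bot_split (a b : ℕ) (h : a ≤ b) :
    Finset.Icc a b = insert a (Finset.Icc (a + 1) b) := by
  ext x; simp only [Finset.mem_Icc, Finset.mem_insert]; omega

lemma Icc_top_split (a b : ℕ) (h : a ≤ b + 1) :
    Finset.Icc a (b + 1) = insert (b + 1) (Finset.Icc a b) := by
  ext x; simp only [Finset.mem_Icc, Finset.mem_insert]; omega

lemma pcal_succ (L : List ℕ) (n m : ℕ) (h : m < n) :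
    pcal L n (m + 1) = conjList L (n - m) + pcal L n m := by
  unfold pcal
  have h1 : n - (m + 1) + 1 = n - m := by omega
  rw [h1, Icc_bot_split (n - m) n (by omega), Finset.sum_insert (by simp)]

lemma lemB {n s : ℕ} {L : List ℕ} {a : Fin n} (S : Finset (Fin n)) (ha : a ∉ S)
    (i d : ℕ) (hd : 0 < d)
    (h1 : S.card + 1 - pcal L n (S.card + 1) ≤ d)
    (h2 : S.card - pcal L n S.card < d + i) :
    (X a : MvPolynomial (Fin n) ℚ) ^ i * esymF S d ∈ IdealI n s L := by
  induction i generalizing d with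
  | zero => simpa using gen_mem (by omega)
  | succ i ih =>
    obtain ⟨e, rfl⟩ : ∃ e, d = e + 1 := ⟨d - 1, by omega⟩
    have : (X a : MvPolynomial (Fin n) ℚ) ^ (i+1) * esymF S (e+1)
        = X a ^ i * esymF (insert a S) (e+1+1) - X a ^ i * esymF S (e+1+1) := by
      rw [esym_insert S a ha (e+1)]; ring
    rw [this]
    refine Ideal.sub_mem _ (Ideal.mul_mem_left _ _ (gen_mem ?_))
      (ih (e + 2) (by omega) (by omega) (by omega))
    rw [Finset.card_insert_of_notMem ha]
    omega

lemma lemA {n s : ℕ} {L : List ℕ} {a : Fin n} (S : Finset (Fin n)) (ha : a ∉ S)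
    (i d : ℕ) (hd : 0 < d)
    (h1 : S.card + 1 - pcal L n (S.card + 1) < d) :
    (X a : MvPolynomial (Fin n) ℚ) ^ i * esymF S d ∈
      Ideal.span {(X a : MvPolynomial (Fin n) ℚ) ^ (i + 1)} ⊔ IdealI n s L := by
  obtain ⟨e, rfl⟩ : ∃ e, d = e + 1 := ⟨d - 1, by omega⟩
  have : (X a : MvPolynomial (Fin n) ℚ) ^ i * esymF S (e+1)
      = X a ^ i * esymF (insert a S) (e+1) - esymF S e * X a ^ (i+1) := by
    rw [esym_insert S a ha e]; ring
  rw [this]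
  refine Ideal.sub_mem _ (Ideal.mem_sup_right (Ideal.mul_mem_left _ _ (gen_mem ?_)))
    (Ideal.mem_sup_left (Ideal.mul_mem_left _ _ (Ideal.subset_span rfl)))
  rw [Finset.card_insert_of_notMem ha]
  omega

lemma conj_reduce (L : List ℕ) (i : ℕ) (hi : i < L.length) (hpos : ∀ x ∈ L, 0 < x)
    (j : ℕ) (hj : 1 ≤ j) :
    conjList (reduce L i) j = conjList L j - (if j = L.getD i 0 then 1 else 0) := by
  set v := L.getD i 0 with hv
  have hvL : v ∈ L := by rw [hv, List.getD_eq_getElem _ _ hi]; exact List.getElem_mem _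
  have hv1 : 1 ≤ v := hpos v hvL
  have h1 : conjList (reduce L i) j = conjList (L.set i (v - 1)) j := by
    unfold reduce conjList
    rw [List.filter_filter]
    have hp : ∀ x ∈ List.insertionSort (· ≥ ·) (L.set i (v-1)),
        (decide (j ≤ x) && decide (0 < x)) = decide (j ≤ x) := by
      intro x _
      by_cases h : j ≤ x <;> simp [h] <;> omega
    rw [List.filter_congr hp]
    exact ((List.perm_insertionSort _ _).filter _).length_eq
  have hset : L.set i (v - 1) = L.take i ++ (v-1) :: L.drop (i+1) :=
    List.set_eq_take_cons_drop _ hi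
  have hLd : L = L.take i ++ v :: L.drop (i+1) := by
    conv_lhs => rw [← List.take_append_drop i L]
    rw [List.drop_eq_getElem_cons hi]
    congr 2
    rw [hv, List.getD_eq_getElem _ _ hi]
  rw [h1]
  unfold conjList
  rw [hset]
  conv_rhs => rw [hLd]
  rw [List.filter_append, List.filter_append, List.length_append, List.length_append,
    List.filter_cons, List.filter_cons]
  simp only [List.filter_cons, decide_eq_true_eq]
  split_ifs <;> first | omega | (simp only [List.length_cons]; omega)

lemma conjList_le_length (L : List ℕ) (j : ℕ) : conjList L j ≤ L.length :=
  List.length_filter_le _ _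

lemma conjList_pos_of_mem {L : List ℕ} {v j : ℕ} (hv : v ∈ L) (hj : j ≤ v) :
    1 ≤ conjList L j := by
  have : v ∈ L.filter fun x => j ≤ x := List.mem_filter.2 ⟨hv, by simpa using hj⟩
  have := List.length_pos_iff.2 (List.ne_nil_of_mem this)
  unfold conjList; omega

lemma conjList_eq_zero {L : List ℕ} {j : ℕ} (h : ∀ x ∈ L, x < j) : conjList L j = 0 := by
  unfold conjList
  rw [List.length_eq_zero_iff, List.filter_eq_nil_iff]
  intro x hx
  simpa using Nat.not_le.2 (h x hx)

lemma sorted_bound {L : List ℕ} (hs : L.Pairwise (· ≥ ·)) {i t : ℕ} (hi : i < L.length)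
    (hv : L.getD i 0 < t) : conjList L t ≤ i := by
  have hLd : L = L.take i ++ L.getD i 0 :: L.drop (i+1) := by
    conv_lhs => rw [← List.take_append_drop i L]
    rw [List.drop_eq_getElem_cons hi]
    congr 2
    rw [List.getD_eq_getElem _ _ hi]
  unfold conjList
  conv_lhs => rw [hLd]
  rw [List.filter_append, List.filter_cons, List.length_append]
  have hdrop : (List.filter (fun x => decide (t ≤ x)) (L.drop (i+1))).length = 0 := by
    rw [List.length_eq_zero_iff, List.filter_eq_nil_iff]
    intro x hx
    have hsd : (L.drop i).Pairwise (· ≥ ·) := hs.drop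
    rw [List.drop_eq_getElem_cons hi, List.pairwise_cons] at hsd
    have : L.getD i 0 ≥ x := by
      rw [List.getD_eq_getElem _ _ hi]; exact hsd.1 x hx
    simpa using (by omega : ¬ t ≤ x)
  rw [if_neg (by simpa using (by omega : ¬ t ≤ L.getD i 0)), hdrop]
  have := List.length_filter_le (fun x => decide (t ≤ x)) (L.take i)
  have := List.length_take_le i L
  omega

lemma pcal_reduce (L : List ℕ) (hpos : ∀ x ∈ L, 0 < x) (n m i : ℕ)
    (hi : i < L.length) (hm : 0 < m) (hmn : m ≤ n - 1) (hn : 2 ≤ n) :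
    pcal (reduce L i) (n - 1) m
      + (if n - m ≤ L.getD i 0 ∧ L.getD i 0 ≤ n - 1 then 1 else 0)
      + conjList L n = pcal L n (m + 1) := by
  set v := L.getD i 0 with hv
  have hvL : v ∈ L := by rw [hv, List.getD_eq_getElem _ _ hi]; exact List.getElem_mem _
  obtain ⟨n', rfl⟩ : ∃ n', n = n' + 1 := ⟨n - 1, by omega⟩
  have hb1 : n' + 1 - (m + 1) + 1 = n' + 1 - m := by omega
  have hb2 : n' + 1 - 1 - m + 1 = n' + 1 - m := by omega
  unfold pcal
  rw [hb1, hb2]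
  rw [Icc_top_split (n' + 1 - m) n' (by omega), Finset.sum_insert (by simp)]
  have hsum : ∑ j ∈ Finset.Icc (n' + 1 - m) (n' + 1 - 1), conjList (reduce L i) j
      + (if n' + 1 - m ≤ v ∧ v ≤ n' + 1 - 1 then 1 else 0)
      = ∑ j ∈ Finset.Icc (n' + 1 - m) n', conjList L j := by
    have h1 : ∀ j ∈ Finset.Icc (n' + 1 - m) n',
        conjList L j = conjList (reduce L i) j + (if j = v then 1 else 0) := by
      intro j hj
      rw [Finset.mem_Icc] at hj
      have hj1 : 1 ≤ j := by omega
      rw [conj_reduce L i hi hpos j hj1, ← hv]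
      split_ifs with h
      · subst h
        have := conjList_pos_of_mem hvL (le_refl v)
        omega
      · omega
    have hsimp : (n' + 1 - 1 : ℕ) = n' := by omega
    rw [hsimp, Finset.sum_congr rfl h1, Finset.sum_add_distrib,
      Finset.sum_ite_eq' _ v fun _ => 1]
    simp only [Finset.mem_Icc]
  omega

lemma pcal_shift (L : List ℕ) (n m : ℕ) (hm : 0 < m) (hmn : m ≤ n - 1) (hn : 2 ≤ n) :
    pcal L (n - 1) m + conjList L n = pcal L n (m + 1) := by
  obtain ⟨n', rfl⟩ : ∃ n', n = n' + 1 := ⟨n - 1, by omega⟩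
  have hb1 : n' + 1 - (m + 1) + 1 = n' + 1 - m := by omega
  have hb2 : n' + 1 - 1 - m + 1 = n' + 1 - m := by omega
  unfold pcal
  rw [hb1, hb2, Icc_top_split (n' + 1 - m) n' (by omega), Finset.sum_insert (by simp)]
  have hsimp : (n' + 1 - 1 : ℕ) = n' := by omega
  rw [hsimp]
  omega

/-- The technical lemma: in each of the four cases (a)–(d),
`x_n^i · e_d(S) ∈ x_n^{i+1}·ℚ[x] + I_{n,λ,s}` for `S ⊆ {x_1,…,x_{n-1}}`, `|S| = m`. -/
theorem stmt11 (n k s : ℕ) (hk : 0 < k) (hs : 0 < s) (hkn : k ≤ n) (hn : 2 ≤ n)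
    (L : List ℕ) (hL : IsPartitionOf k s L)
    (d m : ℕ) (hd : 0 < d) (hm : 0 < m) (i : ℕ)
    (S : Finset (Fin n)) (hS : ∀ x ∈ S, (x : ℕ) < n - 1) (hScard : S.card = m)
    (hcase :
      (m + 1 - pcal L n (m + 1) < d) ∨
      (d = m + 1 - pcal L n (m + 1) ∧ m - pcal L n m < d + i) ∨
      (i < L.length ∧ m - pcal (reduce L i) (n - 1) m < d) ∨
      (L.length ≤ i ∧ i ≤ s - 1 ∧ k < n ∧ m - pcal L (n - 1) m < d)) :
    (X (⟨n - 1, by omega⟩ : Fin n)) ^ i * esymF S d ∈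
      Ideal.span {(X (⟨n - 1, by omega⟩ : Fin n) : MvPolynomial (Fin n) ℚ) ^ (i + 1)} ⊔
        IdealI n s L := by
  obtain ⟨hsort, hpos, hsum, hlen⟩ := hL
  set a : Fin n := ⟨n - 1, by omega⟩ with hadef
  have ha : a ∉ S := fun haS => by have := hS a haS; simp [hadef] at this
  have hmn : m ≤ n - 1 := by
    rw [← hScard]
    have hsub : S ⊆ Finset.univ.erase a := fun x hx =>
      Finset.mem_erase.2 ⟨fun h => by have := hS x hx; rw [h] at this; simp [hadef] at this,
        Finset.mem_univ x⟩
    have := Finset.card_le_card hsub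
    rwa [Finset.card_erase_of_mem (Finset.mem_univ a), Finset.card_univ, Fintype.card_fin] at this
  have hP := pcal_succ L n m (by omega)
  -- reduce to cases (A) or (B)
  have hAB : (m + 1 - pcal L n (m + 1) < d) ∨
      (m + 1 - pcal L n (m + 1) ≤ d ∧ m - pcal L n m < d + i) := by
    rcases hcase with h | ⟨h1, h2⟩ | ⟨hiL, hlt⟩ | ⟨hlL, _, hkn', hlt⟩
    · exact Or.inl h
    · exact Or.inr ⟨le_of_eq h1.symm, h2⟩
    · -- case (c)
      set v := L.getD i 0 with hv
      have hvL : v ∈ L := by rw [hv, List.getD_eq_getElem _ _ hiL]; exact List.getElem_mem _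
      have hE2 := pcal_reduce L hpos n m i hiL hm hmn hn
      by_cases hind : n - m ≤ v ∧ v ≤ n - 1
      · rw [if_pos hind] at hE2
        left; omega
      · rw [if_neg hind] at hE2
        by_cases hcn : conjList L n = 0
        · have hvn : v ≤ n - 1 := by
            by_contra hgt
            have := conjList_pos_of_mem hvL (by omega : n ≤ v)
            omega
          have hvnm : v < n - m := by
            rcases not_and_or.1 hind with h | h
            · omega
            · omega
          have hci := sorted_bound hsort hiL (show v < n - m from hvnm)
          right
          omega
        · left; omega
    · -- case (d)
      have hE3 := pcal_shift L n m hm hmn hn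
      have hcn : conjList L n = 0 := conjList_eq_zero fun x hx => by
        have hx2 : x ≤ L.sum := List.single_le_sum (fun y _ => Nat.zero_le y) x hx
        omega
      have hci : conjList L (n - m) ≤ i :=
        le_trans (conjList_le_length L _) hlL
      right
      omega
  subst hScard
  rcases hAB with h | ⟨h1, h2⟩
  · exact lemA S ha i d hd (by omega)
  · exact Ideal.mem_sup_right (lemB S ha i d hd (by omega) h2)
end

section
/- Let 1 ≤ j ≤ n, let I = (i_1 < ⋯ < i_j) ∈ I_s^j, and let S ⊆ {x_1,…,x_{n−j}} and d ≥ 1 satisfy d > |S| − p^{n−j}_{|S|}(λ^{(I)}). Set a := p^n_{|S|+j}(λ) − p^{n−j}_{|S|}(λ^{(I)}) (one checks 0 ≤ a ≤ j). Then e_d(S ∪ {x_{n−j+1},…,x_{n−j+a}}) · x_{n−j+1}^{i_1} x_{n−j+2}^{i_2} ⋯ x_n^{i_j} ∈ I_{n,λ,s}. -/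
open MvPolynomial

/-- The idempotent `ε_j = (1/j!) Σ sgn(π) π`, summed over the permutations fixing the
letters `0,…,n-j-1`, acting linearly on polynomials by permuting the variables. -/
noncomputable def epsPoly (n j : ℕ) :
    MvPolynomial (Fin n) ℚ →ₗ[ℚ] MvPolynomial (Fin n) ℚ :=
  (j.factorial : ℚ)⁻¹ •
    ∑ π ∈ Finset.univ.filter
        (fun π : Equiv.Perm (Fin n) => ∀ i : Fin n, (i : ℕ) < n - j → π i = i),
      ((Equiv.Perm.sign π : ℤ) : ℚ) • (rename (⇑π) (R := ℚ)).toLinearMap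

/-- The subspace `ε_j R_{n,λ,s}` of the quotient ring `R_{n,λ,s}`. -/
noncomputable def epsSubmodule (n s j : ℕ) (L : List ℕ) :
    Submodule ℚ (MvPolynomial (Fin n) ℚ ⧸ IdealI n s L) :=
  Submodule.map ((Ideal.Quotient.mkₐ ℚ (IdealI n s L)).toLinearMap ∘ₗ epsPoly n j) ⊤

/-- The variable `z_{h+1} = x_{n-j+h}` (0-indexed `h`). -/
def zvar (n j : ℕ) (hjn : j ≤ n) (h : Fin j) : Fin n :=
  ⟨n - j + (h : ℕ), by have := h.isLt; omega⟩

/-- The monomial `z_1^{i_1} ⋯ z_j^{i_j}` where `(i_1 < ⋯ < i_j)` enumerates `T`. -/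
noncomputable def zMono (n j : ℕ) (hjn : j ≤ n) (T : Finset ℕ) : MvPolynomial (Fin n) ℚ :=
  ∏ h : Fin j, X (zvar n j hjn h) ^ ((T.sort (· ≤ ·)).getD (h : ℕ) 0)

namespace Stmt14Aux

instance : IsTotal ℕ (· ≥ ·) := ⟨fun a b => le_total b a⟩
instance : IsTrans ℕ (· ≥ ·) := ⟨fun _ _ _ h h' => le_trans h' h⟩

lemma conjList_eq_countP (L : List ℕ) (c : ℕ) :
    conjList L c = L.countP (fun x => c ≤ x) := by
  rw [conjList, List.countP_eq_length_filter]

lemma conjList_le_length (L : List ℕ) (c : ℕ) : conjList L c ≤ L.length :=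
  List.length_filter_le _ _

lemma conjList_anti (L : List ℕ) {c c' : ℕ} (h : c ≤ c') : conjList L c' ≤ conjList L c := by
  rw [conjList_eq_countP, conjList_eq_countP]
  exact List.countP_mono_left (fun x _ hx => by
    simp only [decide_eq_true_eq] at *; omega)

lemma sorted_le_getD_iff (L : List ℕ) (hL : L.Pairwise (· ≥ ·)) :
    ∀ (i : ℕ), i < L.length → ∀ (c : ℕ), (c ≤ L.getD i 0 ↔ i < conjList L c) := by
  induction L with
  | nil => intro i hi; simp at hi
  | cons x L ih =>
    intro i hi c
    rw [conjList_eq_countP, List.countP_cons]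
    have htail : ∀ y ∈ L, y ≤ x := fun y hy => List.rel_of_pairwise_cons hL hy
    have hzero : ¬ c ≤ x → L.countP (fun x => c ≤ x) = 0 := by
      intro hcx
      rw [List.countP_eq_zero]
      intro y hy
      simp only [decide_eq_true_eq]
      have := htail y hy; omega
    match i with
    | 0 =>
      simp only [List.getD_cons_zero]
      constructor
      · intro hcx
        have h1 : (if (decide (c ≤ x)) = true then 1 else 0) = 1 := by simp [hcx]
        omega
      · intro hpos
        by_contra hcx
        rw [hzero hcx] at hpos
        have h1 : (if (decide (c ≤ x)) = true then 1 else 0) = 0 := by simp [hcx]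
        omega
    | i + 1 =>
      simp only [List.getD_cons_succ]
      have hi' : i < L.length := by simpa using hi
      rw [ih hL.of_cons i hi' c, conjList_eq_countP]
      by_cases hcx : c ≤ x
      · have h1 : (if (decide (c ≤ x)) = true then 1 else 0) = 1 := by simp [hcx]
        omega
      · rw [hzero hcx]
        have h1 : (if (decide (c ≤ x)) = true then 1 else 0) = 0 := by simp [hcx]
        have hmem : L.getD i 0 ∈ L := by
          rw [List.getD_eq_getElem _ _ hi']
          exact List.getElem_mem _
        have h2 := htail _ hmem
        constructor
        · intro hle; omega
        · intro h; omega

lemma countP_set (p : ℕ → Bool) (v : ℕ) :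
    ∀ (L : List ℕ) (i : ℕ), i < L.length →
      (L.set i v).countP p + (if p (L.getD i 0) then 1 else 0)
        = L.countP p + (if p v then 1 else 0) := by
  intro L
  induction L with
  | nil => intro i hi; simp at hi
  | cons x L ih =>
    intro i hi
    match i with
    | 0 => simp only [List.set_cons_zero, List.getD_cons_zero, List.countP_cons]; omega
    | i + 1 =>
      have hi' : i < L.length := by simpa using hi
      simp only [List.set_cons_succ, List.getD_cons_succ, List.countP_cons]
      have := ih i hi'
      omega

lemma reduceStep_sorted (L : List ℕ) (i : ℕ) (hL : L.Pairwise (· ≥ ·)) :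
    (reduceStep L i).Pairwise (· ≥ ·) := by
  rw [reduceStep]
  split
  · exact (List.pairwise_insertionSort _ _).filter _
  · exact hL

lemma conjList_reduceStep (L : List ℕ) (hL : L.Pairwise (· ≥ ·)) (i c : ℕ) (hc : 1 ≤ c) :
    conjList (reduceStep L i) c + (if i < conjList L c then 1 else 0)
      = conjList L c + (if i < conjList L (c + 1) then 1 else 0) := by
  rw [reduceStep]
  split
  · next hilen =>
    set v := L.getD i 0 with hv
    have hperm : (reduce L i).countP (fun x => c ≤ x)
        = (L.set i (v - 1)).countP (fun x => c ≤ x) := by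
      rw [reduce]
      rw [List.countP_filter]
      rw [(List.perm_insertionSort (· ≥ ·) (L.set i (v - 1))).countP_eq]
      · apply List.countP_congr
        intro y _
        simp only [decide_eq_true_eq, Bool.and_eq_true]
        omega
    have hset := countP_set (fun x => c ≤ x) (v - 1) L i hilen
    have e1 : (c ≤ v) ↔ i < conjList L c := sorted_le_getD_iff L hL i hilen c
    have e2 : (c + 1 ≤ v) ↔ i < conjList L (c + 1) := sorted_le_getD_iff L hL i hilen (c + 1)
    have e3 : (c ≤ v - 1) ↔ (c + 1 ≤ v) := by omega
    rw [conjList_eq_countP, hperm]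
    rw [conjList_eq_countP, conjList_eq_countP] at *
    simp only [decide_eq_true_eq] at hset
    rw [← hv] at hset
    by_cases h1 : c ≤ v <;> by_cases h2 : c + 1 ≤ v <;>
      simp only [h1, h2, e1.symm, e2.symm, if_true, if_false, e3] at * <;> omega
  · next hilen =>
    have hle : conjList L c ≤ L.length := conjList_le_length L c
    have hle2 : conjList L (c + 1) ≤ L.length := conjList_le_length L (c + 1)
    have h1 : ¬ i < conjList L c := by omega
    have h2 : ¬ i < conjList L (c + 1) := by omega
    simp [h1, h2]

/-- `E(c)`: number of peel indices `< λ'_c`. -/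
def ED (D L : List ℕ) (c : ℕ) : ℕ := D.countP (fun i => i < conjList L c)

lemma conjList_reduceStep_le (L : List ℕ) (hL : L.Pairwise (· ≥ ·)) (i c : ℕ) (hc : 1 ≤ c) :
    conjList (reduceStep L i) c ≤ conjList L c := by
  have h := conjList_reduceStep L hL i c hc
  have hanti : conjList L (c + 1) ≤ conjList L c := conjList_anti L (by omega)
  by_cases h1 : i < conjList L c <;> by_cases h2 : i < conjList L (c + 1) <;>
    simp only [h1, h2, if_true, if_false] at h <;> omega

lemma conjList_reduceStep_lt_iff (L : List ℕ) (hL : L.Pairwise (· ≥ ·)) (i0 i c : ℕ)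
    (hc : 1 ≤ c) (hi : i < i0) :
    (i < conjList (reduceStep L i0) c) ↔ i < conjList L c := by
  have h := conjList_reduceStep L hL i0 c hc
  have hanti : conjList L (c + 1) ≤ conjList L c := conjList_anti L (by omega)
  by_cases h1 : i0 < conjList L c <;> by_cases h2 : i0 < conjList L (c + 1) <;>
    simp only [h1, h2, if_true, if_false] at h <;> omega

lemma factP (D : List ℕ) : ∀ (L : List ℕ), L.Pairwise (· ≥ ·) → D.Pairwise (· > ·) →
    ∀ (c : ℕ), 1 ≤ c →
    conjList (reduceSeq L D) c + ED D L c = conjList L c + ED D L (c + 1) := by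
  induction D with
  | nil => intro L _ _ c _; simp [reduceSeq, ED]
  | cons i0 D' ih =>
    intro L hL hD c hc
    have hD' : D'.Pairwise (· > ·) := hD.of_cons
    have hhead : ∀ i ∈ D', i < i0 := fun i hi => List.rel_of_pairwise_cons hD hi
    have hL1 : (reduceStep L i0).Pairwise (· ≥ ·) := reduceStep_sorted L i0 hL
    have hstep := conjList_reduceStep L hL i0 c hc
    have hih := ih (reduceStep L i0) hL1 hD' c hc
    have hE1 : ED D' (reduceStep L i0) c = ED D' L c := by
      apply List.countP_congr
      intro i hi
      simp only [decide_eq_true_eq]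
      exact conjList_reduceStep_lt_iff L hL i0 i c hc (hhead i hi)
    have hE2 : ED D' (reduceStep L i0) (c + 1) = ED D' L (c + 1) := by
      apply List.countP_congr
      intro i hi
      simp only [decide_eq_true_eq]
      exact conjList_reduceStep_lt_iff L hL i0 i (c + 1) (by omega) (hhead i hi)
    have hseq : reduceSeq L (i0 :: D') = reduceSeq (reduceStep L i0) D' := rfl
    have hcons1 : ED (i0 :: D') L c = ED D' L c + (if i0 < conjList L c then 1 else 0) := by
      rw [ED, List.countP_cons]; simp only [decide_eq_true_eq]; rfl
    have hcons2 : ED (i0 :: D') L (c + 1)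
        = ED D' L (c + 1) + (if i0 < conjList L (c + 1) then 1 else 0) := by
      rw [ED, List.countP_cons]; simp only [decide_eq_true_eq]; rfl
    rw [hseq, hcons1, hcons2]
    rw [hE1, hE2] at hih
    omega

lemma reduceSeq_sorted (D : List ℕ) : ∀ L, L.Pairwise (· ≥ ·) → (reduceSeq L D).Pairwise (· ≥ ·) := by
  induction D with
  | nil => intro L hL; exact hL
  | cons i0 D' ih => intro L hL; exact ih _ (reduceStep_sorted L i0 hL)

lemma ED_le (D L : List ℕ) (c : ℕ) (hD : D.Nodup) : ED D L c ≤ conjList L c := by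
  rw [ED, List.countP_eq_length_filter]
  have hnodup : (D.filter (fun i => i < conjList L c)).Nodup := hD.filter _
  have hsub : (D.filter (fun i => i < conjList L c)).toFinset ⊆ Finset.range (conjList L c) := by
    intro x hx
    simp only [List.mem_toFinset, List.mem_filter, decide_eq_true_eq] at hx
    simp only [Finset.mem_range]
    exact hx.2
  have := Finset.card_le_card hsub
  rw [List.toFinset_card_of_nodup hnodup] at this
  simpa using this

lemma conjList_reduceSeq_le (D : List ℕ) : ∀ (L : List ℕ), L.Pairwise (· ≥ ·) →
    ∀ c, 1 ≤ c → conjList (reduceSeq L D) c ≤ conjList L c := by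
  induction D with
  | nil => intro L _ c _; exact le_refl _
  | cons i0 D' ih =>
    intro L hL c hc
    exact le_trans (ih _ (reduceStep_sorted L i0 hL) c hc)
      (conjList_reduceStep_le L hL i0 c hc)

/-- telescoped Fact P over a window `Ioc x y`. -/
lemma factP_sum (D L : List ℕ) (hL : L.Pairwise (· ≥ ·)) (hD : D.Pairwise (· > ·)) :
    ∀ (x y : ℕ), x ≤ y →
    (∑ c ∈ Finset.Ioc x y, conjList (reduceSeq L D) c) + ED D L (x + 1)
      = (∑ c ∈ Finset.Ioc x y, conjList L c) + ED D L (y + 1) := by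
  intro x y
  induction y with
  | zero => intro hx; interval_cases x; simp
  | succ y ihy =>
    intro hx
    rcases Nat.lt_or_ge x (y + 1) with hxy | hxy
    · have hx' : x ≤ y := by omega
      have h1 := ihy hx'
      rw [Finset.sum_Ioc_succ_top hx', Finset.sum_Ioc_succ_top hx']
      have h2 := factP D L hL hD (y + 1) (by omega)
      omega
    · have hxeq : x = y + 1 := by omega
      subst hxeq
      simp

lemma esymF_insert {n : ℕ} (z : Fin n) (U : Finset (Fin n)) (hz : z ∉ U) (D : ℕ) :
    esymF (insert z U) (D + 1) = esymF U (D + 1) + X z * esymF U D := by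
  rw [esymF, esymF, esymF]
  rw [Finset.powersetCard_succ_insert hz]
  rw [Finset.sum_union]
  · congr 1
    rw [Finset.sum_image]
    · rw [Finset.mul_sum]
      apply Finset.sum_congr rfl
      intro t ht
      rw [Finset.mem_powersetCard] at ht
      have hzt : z ∉ t := fun hmem => hz (ht.1 hmem)
      rw [Finset.prod_insert hzt]
    · intro t1 ht1 t2 ht2 heq
      rw [Finset.mem_coe, Finset.mem_powersetCard] at ht1 ht2
      have h1 : z ∉ t1 := fun hmem => hz (ht1.1 hmem)
      have h2 : z ∉ t2 := fun hmem => hz (ht2.1 hmem)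
      have := congrArg (fun (u : Finset (Fin n)) => u.erase z) heq
      simpa [Finset.erase_insert h1, Finset.erase_insert h2] using this
  · rw [Finset.disjoint_left]
    intro t ht ht'
    rw [Finset.mem_powersetCard] at ht
    rcases Finset.mem_image.mp ht' with ⟨u, _, rfl⟩
    exact hz (ht.1 (Finset.mem_insert_self z u))

lemma esymF_gen_mem {n s : ℕ} (L : List ℕ) (U : Finset (Fin n)) (D : ℕ)
    (h : U.card - pcal L n U.card < D) : esymF U D ∈ IdealI n s L := by
  apply Ideal.subset_span
  exact Set.mem_union_right _ ⟨U, D, h, rfl⟩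

/-- **Master lemma**: absorption induction. -/
lemma masterLemma {n : ℕ} (s : ℕ) (L : List ℕ) :
    ∀ (N : ℕ) (c : Fin n → ℕ) (U : Finset (Fin n)) (D : ℕ),
      (∑ z ∈ (Finset.univ.filter fun z => c z ≠ 0) \ U, c z) = N →
      (∀ Γ ⊆ (Finset.univ.filter fun z => c z ≠ 0) \ U,
        U.card + Γ.card - pcal L n (U.card + Γ.card) <
          D + (∑ z ∈ ((Finset.univ.filter fun z => c z ≠ 0) \ U) \ Γ, c z) + Γ.card) →
      esymF U D * ∏ z, X z ^ c z ∈ IdealI n s L := by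
  intro N
  induction N using Nat.strong_induction_on with
  | _ N ih =>
    intro c U D hsum H
    set F := (Finset.univ.filter fun z => c z ≠ 0) \ U with hF
    by_cases hFe : F = ∅
    · have h0 := H ∅ (Finset.empty_subset _)
      simp only [Finset.card_empty, Finset.sdiff_empty, add_zero, hFe,
        Finset.sum_empty] at h0
      exact Ideal.mul_mem_right _ _ (esymF_gen_mem L U D h0)
    · obtain ⟨z, hzF⟩ := Finset.nonempty_iff_ne_empty.mpr hFe
      have hzc : c z ≠ 0 := by
        have := (Finset.mem_sdiff.mp hzF).1
        simpa using this
      have hzU : z ∉ U := (Finset.mem_sdiff.mp hzF).2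
      set c' : Fin n → ℕ := Function.update c z (c z - 1) with hc'
      -- monomial factorization
      have hmono : (∏ w, X w ^ c w : MvPolynomial (Fin n) ℚ) = X z * ∏ w, X w ^ c' w := by
        rw [← Finset.mul_prod_erase Finset.univ _ (Finset.mem_univ z),
            ← Finset.mul_prod_erase Finset.univ _ (Finset.mem_univ z)]
        have h1 : (X z : MvPolynomial (Fin n) ℚ) ^ c z = X z * X z ^ (c z - 1) := by
          conv_lhs => rw [show c z = (c z - 1) + 1 by omega]
          ring
        have h2 : c' z = c z - 1 := Function.update_self z _ c
        have h3 : ∀ w ∈ Finset.univ.erase z, (X w : MvPolynomial (Fin n) ℚ) ^ c' w = X w ^ c w := by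
          intro w hw
          have : w ≠ z := (Finset.mem_erase.mp hw).1
          rw [hc', Function.update_of_ne this]
        rw [Finset.prod_congr rfl h3, h2, h1]
        ring
      -- the identity
      have hid : esymF U D * ∏ w, X w ^ c w
          = esymF (insert z U) (D + 1) * ∏ w, X w ^ c' w
            - esymF U (D + 1) * ∏ w, X w ^ c' w := by
        rw [hmono, esymF_insert z U hzU D]
        ring
      rw [hid]
      -- set bookkeeping
      have hF1sub : ((Finset.univ.filter fun w => c' w ≠ 0) \ U) ⊆ F := by
        intro w hw
        rw [Finset.mem_sdiff] at hw ⊢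
        refine ⟨?_, hw.2⟩
        simp only [Finset.mem_filter, Finset.mem_univ, true_and] at hw ⊢
        intro hcw
        apply hw.1
        by_cases hwz : w = z
        · subst hwz; rw [hc', Function.update_self]; omega
        · rw [hc', Function.update_of_ne hwz]; exact hcw
      have hcceq : ∀ w, w ≠ z → c' w = c w := fun w hw => Function.update_of_ne hw _ _
      have hczpos : 1 ≤ c z := by omega
      have hczN : c z ≤ N := by
        have := Finset.add_sum_erase F c hzF
        omega
      -- F₂ : the F-set for (c', insert z U)
      have hF2 : ((Finset.univ.filter fun w => c' w ≠ 0) \ (insert z U)) = F.erase z := by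
        ext w
        simp only [Finset.mem_sdiff, Finset.mem_filter, Finset.mem_univ, true_and,
          Finset.mem_insert, Finset.mem_erase, hF, not_or]
        constructor
        · rintro ⟨hcw, hwz, hwU⟩
          refine ⟨hwz, ?_, hwU⟩
          rw [hcceq w hwz] at hcw
          exact hcw
        · rintro ⟨hwz, hcw, hwU⟩
          exact ⟨by rw [hcceq w hwz]; exact hcw, hwz, hwU⟩
      have hzcardU : (insert z U).card = U.card + 1 := Finset.card_insert_of_notMem hzU
      -- sums over erase
      have herase_sum : ∀ (W : Finset (Fin n)), z ∉ W →
          (∑ w ∈ W, c' w) = ∑ w ∈ W, c w := by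
        intro W hzW
        apply Finset.sum_congr rfl
        intro w hw
        exact hcceq w (fun h => hzW (h ▸ hw))
      -- the two children memberships
      have child2 : esymF (insert z U) (D + 1) * ∏ w, X w ^ c' w ∈ IdealI n s L := by
        have hs2 : (∑ w ∈ (Finset.univ.filter fun w => c' w ≠ 0) \ (insert z U), c' w)
            = N - c z := by
          rw [hF2, herase_sum _ (Finset.notMem_erase z F)]
          have := Finset.add_sum_erase F c hzF
          omega
        refine ih (N - c z) (by omega) c' (insert z U) (D + 1) hs2 ?_
        intro Γ hΓ
        rw [hF2] at hΓ ⊢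
        have hzΓ : z ∉ Γ := fun h => (Finset.mem_erase.mp (hΓ h)).1 rfl
        have hins : insert z Γ ⊆ F := by
          intro w hw
          rcases Finset.mem_insert.mp hw with rfl | hw'
          · exact hzF
          · exact Finset.mem_of_mem_erase (hΓ hw')
        have h := H (insert z Γ) hins
        have hseteq : F \ insert z Γ = (F.erase z) \ Γ := by
          ext w
          simp only [Finset.mem_sdiff, Finset.mem_insert, Finset.mem_erase, not_or]
          tauto
        rw [hseteq] at h
        have hsum_eq : (∑ w ∈ (F.erase z) \ Γ, c' w) = ∑ w ∈ (F.erase z) \ Γ, c w := by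
          apply herase_sum
          intro hmem
          exact (Finset.mem_erase.mp (Finset.mem_sdiff.mp hmem).1).1 rfl
        have hcardins : (insert z Γ).card = Γ.card + 1 := Finset.card_insert_of_notMem hzΓ
        rw [hcardins] at h
        have harg : U.card + (Γ.card + 1) = U.card + 1 + Γ.card := by omega
        rw [harg] at h
        rw [hzcardU, hsum_eq]
        omega
      have child1 : esymF U (D + 1) * ∏ w, X w ^ c' w ∈ IdealI n s L := by
        set F1 := (Finset.univ.filter fun w => c' w ≠ 0) \ U with hF1
        have hsumF : (∑ w ∈ F, c w) = c z + ∑ w ∈ F.erase z, c w :=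
          (Finset.add_sum_erase F c hzF).symm
        by_cases hc1 : c z = 1
        · -- F1 = F.erase z
          have hF1eq : F1 = F.erase z := by
            ext w
            simp only [hF1, Finset.mem_sdiff, Finset.mem_filter, Finset.mem_univ, true_and,
              Finset.mem_erase, hF]
            constructor
            · rintro ⟨hcw, hwU⟩
              have hwz : w ≠ z := by
                rintro rfl
                rw [hc', Function.update_self, hc1] at hcw
                omega
              rw [hcceq w hwz] at hcw
              exact ⟨hwz, hcw, hwU⟩
            · rintro ⟨hwz, hcw, hwU⟩
              exact ⟨by rw [hcceq w hwz]; exact hcw, hwU⟩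
          have hs1 : (∑ w ∈ F1, c' w) = N - 1 := by
            rw [hF1eq, herase_sum _ (Finset.notMem_erase z F)]
            omega
          refine ih (N - 1) (by omega) c' U (D + 1) hs1 ?_
          intro Γ hΓ
          rw [← hF1] at hΓ ⊢
          rw [hF1eq] at hΓ
          have hzΓ : z ∉ Γ := fun h => (Finset.mem_erase.mp (hΓ h)).1 rfl
          have hΓF : Γ ⊆ F := fun w hw => Finset.mem_of_mem_erase (hΓ hw)
          have h := H Γ hΓF
          -- F \ Γ = insert z (F.erase z \ Γ)
          have hzin : z ∈ F \ Γ := Finset.mem_sdiff.mpr ⟨hzF, hzΓ⟩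
          have hsplit : (∑ w ∈ F \ Γ, c w) = c z + ∑ w ∈ (F \ Γ).erase z, c w :=
            (Finset.add_sum_erase _ c hzin).symm
          have hseteq : (F \ Γ).erase z = (F.erase z) \ Γ := by
            ext w
            simp only [Finset.mem_sdiff, Finset.mem_erase]
            tauto
          rw [hF1eq]
          have hsum_eq : (∑ w ∈ (F.erase z) \ Γ, c' w) = ∑ w ∈ (F.erase z) \ Γ, c w := by
            apply herase_sum
            intro hmem
            exact (Finset.mem_erase.mp (Finset.mem_sdiff.mp hmem).1).1 rfl
          rw [hsum_eq, ← hseteq]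
          omega
        · -- c z ≥ 2 : F1 = F
          have hF1eq : F1 = F := by
            apply Finset.Subset.antisymm hF1sub
            intro w hw
            simp only [hF1, Finset.mem_sdiff, Finset.mem_filter, Finset.mem_univ, true_and]
            rw [hF, Finset.mem_sdiff, Finset.mem_filter] at hw
            refine ⟨?_, hw.2⟩
            by_cases hwz : w = z
            · subst hwz; rw [hc', Function.update_self]; omega
            · rw [hcceq w hwz]; exact hw.1.2
          have hs1 : (∑ w ∈ F1, c' w) = N - 1 := by
            rw [hF1eq]
            have : (∑ w ∈ F, c' w) = c' z + ∑ w ∈ F.erase z, c' w :=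
              (Finset.add_sum_erase F c' hzF).symm
            rw [this, herase_sum _ (Finset.notMem_erase z F)]
            have hc'z : c' z = c z - 1 := Function.update_self z _ c
            omega
          refine ih (N - 1) (by omega) c' U (D + 1) hs1 ?_
          intro Γ hΓ
          rw [← hF1] at hΓ ⊢
          rw [hF1eq] at hΓ ⊢
          have h := H Γ hΓ
          by_cases hzΓ : z ∈ Γ
          · have hznot : z ∉ F \ Γ := fun hm => (Finset.mem_sdiff.mp hm).2 hzΓ
            rw [herase_sum _ hznot] at *
            omega
          · have hzin : z ∈ F \ Γ := Finset.mem_sdiff.mpr ⟨hzF, hzΓ⟩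
            have hsplit : (∑ w ∈ F \ Γ, c w) = c z + ∑ w ∈ (F \ Γ).erase z, c w :=
              (Finset.add_sum_erase _ c hzin).symm
            have hsplit' : (∑ w ∈ F \ Γ, c' w) = c' z + ∑ w ∈ (F \ Γ).erase z, c' w :=
              (Finset.add_sum_erase _ c' hzin).symm
            have he : (∑ w ∈ (F \ Γ).erase z, c' w) = ∑ w ∈ (F \ Γ).erase z, c w :=
              herase_sum _ (Finset.notMem_erase z _)
            have hc'z : c' z = c z - 1 := Function.update_self z _ c
            omega
      exact Ideal.sub_mem _ child2 child1

lemma pcal_Ioc (L : List ℕ) (N m : ℕ) :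
    pcal L N m = ∑ c ∈ Finset.Ioc (N - m) N, conjList L c := by
  rw [pcal, Finset.Icc_add_one_left_eq_Ioc]

lemma sorted_take_le (l : List ℕ) (hl : l.Pairwise (· ≤ ·)) :
    ∀ (a : ℕ), a < l.length → ∀ y ∈ l.take (a + 1), y ≤ l.getD a 0 := by
  induction l with
  | nil => intro a ha; simp at ha
  | cons x l ih =>
    intro a ha y hy
    match a with
    | 0 =>
      simp only [List.take_succ_cons, List.take_zero, List.getD_cons_zero] at hy ⊢
      simp only [List.mem_singleton] at hy
      omega
    | a + 1 =>
      simp only [List.take_succ_cons, List.getD_cons_succ] at hy ⊢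
      have ha' : a < l.length := by simpa using ha
      rcases List.mem_cons.mp hy with rfl | hy'
      · have hmem : l.getD a 0 ∈ l := by
          rw [List.getD_eq_getElem _ _ ha']
          exact List.getElem_mem _
        exact List.rel_of_pairwise_cons hl hmem
      · exact ih hl.of_cons a ha' y hy'

lemma sorted_getD_mono (l : List ℕ) (hl : l.Pairwise (· ≤ ·)) (a b : ℕ)
    (hab : a ≤ b) (hb : b < l.length) : l.getD a 0 ≤ l.getD b 0 := by
  rw [List.getD_eq_getElem _ _ (by omega), List.getD_eq_getElem _ _ hb]
  exact List.Pairwise.rel_get_of_le hl (a := ⟨a, by omega⟩) (b := ⟨b, hb⟩) hab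

/-- The main arithmetic lemma. -/
lemma arithMain (n j m d : ℕ) (L : List ℕ) (hL : L.Pairwise (· ≥ ·)) (T : Finset ℕ)
    (hTcard : T.card = j) (hj : 1 ≤ j) (hmn : m + j ≤ n)
    (hd : m - pcal (reduceSeq L ((T.sort (· ≤ ·)).reverse)) (n - j) m < d)
    (g St : ℕ)
    (hg : g ≤ j - min (pcal L n (m + j)
        - pcal (reduceSeq L ((T.sort (· ≤ ·)).reverse)) (n - j) m) j)
    (hSt : (j - min (pcal L n (m + j)
        - pcal (reduceSeq L ((T.sort (· ≤ ·)).reverse)) (n - j) m) j - g)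
        * ((T.sort (· ≤ ·)).getD (pcal L n (m + j)
            - pcal (reduceSeq L ((T.sort (· ≤ ·)).reverse)) (n - j) m) 0) ≤ St) :
    m + min (pcal L n (m + j)
        - pcal (reduceSeq L ((T.sort (· ≤ ·)).reverse)) (n - j) m) j + g
      - pcal L n (m + min (pcal L n (m + j)
          - pcal (reduceSeq L ((T.sort (· ≤ ·)).reverse)) (n - j) m) j + g)
      < d + St + g := by
  set ts := T.sort (· ≤ ·) with hts
  set D := ts.reverse with hDdef
  set ν := reduceSeq L D with hν
  set p := pcal ν (n - j) m with hp
  set A := pcal L n (m + j) with hA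
  set a := A - p with ha
  -- basic facts about D
  have htslen : ts.length = j := by rw [hts, Finset.length_sort]; exact hTcard
  have htssorted : ts.Pairwise (· ≤ ·) := Finset.pairwise_sort _ _
  have hDpair : D.Pairwise (· > ·) := by
    rw [hDdef, List.pairwise_reverse]
    exact (Finset.sortedLT_sort T).pairwise
  have hDnodup : D.Nodup := by
    rw [hDdef, List.nodup_reverse]
    exact Finset.sort_nodup _ _
  -- window sums
  have hWsplit : A = (∑ c ∈ Finset.Ioc (n - j - m) (n - j), conjList L c)
      + ∑ c ∈ Finset.Ioc (n - j) n, conjList L c := by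
    rw [hA, pcal_Ioc]
    rw [show n - (m + j) = n - j - m by omega]
    rw [Finset.sum_Ioc_consecutive _ (by omega) (by omega)]
  have hpIoc : p = ∑ c ∈ Finset.Ioc (n - j - m) (n - j), conjList ν c := by
    rw [hp, pcal_Ioc, show n - j - m = n - j - m from rfl]
  -- p ≤ A
  have hpA : p ≤ A := by
    rw [hpIoc, hWsplit]
    have h1 : (∑ c ∈ Finset.Ioc (n - j - m) (n - j), conjList ν c)
        ≤ ∑ c ∈ Finset.Ioc (n - j - m) (n - j), conjList L c := by
      apply Finset.sum_le_sum
      intro c hc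
      have hc1 : 1 ≤ c := by
        have := (Finset.mem_Ioc.mp hc).1; omega
      exact conjList_reduceSeq_le D L hL c hc1
    omega
  have hApa : A = p + a := by omega
  -- KEY inequality
  have hKEY : a < j → conjList L (n - j - m + 1) ≤ ts.getD a 0 := by
    intro haj
    by_contra hC
    push_neg at hC
    set C := conjList L (n - j - m + 1) with hCdef
    -- Fact P telescoped
    have hfact := factP_sum D L hL hDpair (n - j - m) (n - j) (by omega)
    rw [← hpIoc] at hfact
    -- E bounds
    have hEtop : ED D L (n - j + 1) ≤ conjList L (n - j + 1) := ED_le D L _ hDnodup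
    have hsingle : conjList L (n - j + 1) ≤ ∑ c ∈ Finset.Ioc (n - j) n, conjList L c := by
      apply Finset.single_le_sum (fun c _ => Nat.zero_le _)
      rw [Finset.mem_Ioc]
      omega
    -- E(B0) ≥ a + 1
    have hEB : a + 1 ≤ ED D L (n - j - m + 1) := by
      rw [ED, hDdef, List.countP_reverse]
      have hsplit2 : ts.countP (fun i => i < C)
          = (ts.take (a + 1)).countP (fun i => i < C)
            + (ts.drop (a + 1)).countP (fun i => i < C) := by
        conv_lhs => rw [← List.take_append_drop (a + 1) ts]
        rw [List.countP_append]
      have htake : (ts.take (a + 1)).countP (fun i => i < C) = (ts.take (a + 1)).length := by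
        rw [List.countP_eq_length]
        intro y hy
        simp only [decide_eq_true_eq]
        have := sorted_take_le ts htssorted a (by omega) y hy
        omega
      have hlen : (ts.take (a + 1)).length = a + 1 := by
        rw [List.length_take]
        omega
      rw [hsplit2, htake, hlen]
      omega
    omega
  -- now the conclusion
  rcases Nat.lt_or_ge a j with haj | haj
  · -- a < j
    have hmin : min a j = a := by omega
    rw [hmin] at hg hSt ⊢
    set M := m + a + g with hM
    have hMle : M ≤ m + j := by omega
    have hPg : pcal L n M = ∑ c ∈ Finset.Ioc (n - M) n, conjList L c := pcal_Ioc L n M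
    have hsplitM : A = (∑ c ∈ Finset.Ioc (n - j - m) (n - M), conjList L c)
        + pcal L n M := by
      rw [hA, pcal_Ioc, hPg]
      rw [show n - (m + j) = n - j - m by omega]
      rw [Finset.sum_Ioc_consecutive _ (by omega) (by omega)]
    have hq : (Finset.Ioc (n - j - m) (n - M)).card = j - a - g := by
      rw [Nat.card_Ioc]
      omega
    have hbound : (∑ c ∈ Finset.Ioc (n - j - m) (n - M), conjList L c)
        ≤ (j - a - g) * conjList L (n - j - m + 1) := by
      calc (∑ c ∈ Finset.Ioc (n - j - m) (n - M), conjList L c)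
          ≤ (Finset.Ioc (n - j - m) (n - M)).card * conjList L (n - j - m + 1) := by
            rw [← smul_eq_mul]
            apply Finset.sum_le_card_nsmul
            intro c hc
            exact conjList_anti L (by have := (Finset.mem_Ioc.mp hc).1; omega)
        _ = (j - a - g) * conjList L (n - j - m + 1) := by rw [hq]
    have hCa := hKEY haj
    have hfin : (∑ c ∈ Finset.Ioc (n - j - m) (n - M), conjList L c) ≤ St := by
      calc (∑ c ∈ Finset.Ioc (n - j - m) (n - M), conjList L c)
          ≤ (j - a - g) * conjList L (n - j - m + 1) := hbound
        _ ≤ (j - a - g) * ts.getD a 0 := Nat.mul_le_mul_left _ hCa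
        _ ≤ St := hSt
    omega
  · -- a ≥ j
    have hmin : min a j = j := by omega
    rw [hmin] at hg ⊢
    have hg0 : g = 0 := by omega
    subst hg0
    -- A ≥ p + j
    have hApj : p + j ≤ A := by omega
    simp only [add_zero]
    omega

end Stmt14Aux

open Stmt14Aux

/-- For `I ∈ 𝓘_s^j`, `S ⊆ {x_1,…,x_{n-j}}` and
`d > |S| - p^{n-j}_{|S|}(λ^{(I)})`, setting `a = p^n_{|S|+j}(λ) - p^{n-j}_{|S|}(λ^{(I)})`,
we have `e_d(S ∪ {z_1,…,z_a}) · z^I ∈ I_{n,λ,s}`. -/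
theorem stmt14 (n k s : ℕ) (hk : 0 < k) (hs : 0 < s) (hkn : k ≤ n)
    (L : List ℕ) (hL : IsPartitionOf k s L)
    (j : ℕ) (hj : 1 ≤ j) (hjn : j ≤ n)
    (T : Finset ℕ) (hT : T ∈ (Finset.range s).powersetCard j)
    (S : Finset (Fin n)) (hS : ∀ x ∈ S, (x : ℕ) < n - j)
    (d : ℕ) (hd1 : 1 ≤ d)
    (hd : S.card - pcal (lamI L T) (n - j) S.card < d) :
    esymF
        (S ∪ (Finset.univ.filter fun h : Fin j =>
          (h : ℕ) < pcal L n (S.card + j) - pcal (lamI L T) (n - j) S.card).image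
          (zvar n j hjn)) d *
      zMono n j hjn T ∈ IdealI n s L := by
  classical
  have hLsorted : L.Pairwise (· ≥ ·) := hL.1
  obtain ⟨hTsub, hTcard⟩ := Finset.mem_powersetCard.mp hT
  set ts := T.sort (· ≤ ·) with hts
  set m := S.card with hm
  set a := pcal L n (m + j) - pcal (lamI L T) (n - j) m with ha
  set zv := zvar n j hjn with hzv
  -- basic injectivity
  have hzvinj : Function.Injective zv := by
    intro h1 h2 heq
    have : n - j + (h1 : ℕ) = n - j + (h2 : ℕ) := congrArg (fun z : Fin n => (z : ℕ)) heq
    exact Fin.ext (by omega)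
  have hzval : ∀ h : Fin j, (zv h : ℕ) = n - j + (h : ℕ) := fun h => rfl
  -- m + j ≤ n
  have hmn : m + j ≤ n := by
    have himg : S.image (fun z : Fin n => (z : ℕ)) ⊆ Finset.range (n - j) := by
      intro x hx
      rcases Finset.mem_image.mp hx with ⟨z, hz, rfl⟩
      exact Finset.mem_range.mpr (hS z hz)
    have hcard := Finset.card_le_card himg
    rw [Finset.card_image_of_injective _ Fin.val_injective, Finset.card_range] at hcard
    omega
  have htslen : ts.length = j := by rw [hts, Finset.length_sort]; exact hTcard
  -- the exponent function
  set c : Fin n → ℕ := fun z => if n - j ≤ (z : ℕ) then ts.getD ((z : ℕ) - (n - j)) 0 else 0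
    with hc
  have hczv : ∀ h : Fin j, c (zv h) = ts.getD (h : ℕ) 0 := by
    intro h
    rw [hc]
    simp only [hzval]
    rw [if_pos (by omega)]
    congr 1
    omega
  -- zMono as a full product
  have hmono : zMono n j hjn T = ∏ z, X z ^ c z := by
    rw [zMono]
    rw [show (Finset.univ : Finset (Fin n)) = Finset.univ from rfl]
    have himage : ∏ z ∈ Finset.univ.image zv, (X z : MvPolynomial (Fin n) ℚ) ^ c z
        = ∏ h : Fin j, (X (zv h) : MvPolynomial (Fin n) ℚ) ^ c (zv h) :=
      Finset.prod_image (fun x _ y _ hxy => hzvinj hxy)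
    rw [← Finset.prod_subset (Finset.subset_univ (Finset.univ.image zv))
      (fun z _ hz => ?_), himage]
    · exact (Finset.prod_congr rfl fun h _ => by rw [hczv h]).symm
    · -- z not in image: c z = 0
      have hzlt : (z : ℕ) < n - j := by
        by_contra hge
        push_neg at hge
        apply hz
        refine Finset.mem_image.mpr ⟨⟨(z : ℕ) - (n - j), by omega⟩, Finset.mem_univ _, ?_⟩
        apply Fin.ext
        rw [hzval]
        simp only []
        omega
      rw [hc]
      simp only [if_neg (by omega : ¬ n - j ≤ (z : ℕ)), pow_zero]
  -- U and its cardinality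
  set U := S ∪ (Finset.univ.filter fun h : Fin j => (h : ℕ) < a).image zv with hU
  have hdisj : Disjoint S ((Finset.univ.filter fun h : Fin j => (h : ℕ) < a).image zv) := by
    rw [Finset.disjoint_left]
    intro z hzS hzI
    rcases Finset.mem_image.mp hzI with ⟨h, _, rfl⟩
    have := hS _ hzS
    rw [hzval] at this
    omega
  have hfiltcard : (Finset.univ.filter fun h : Fin j => (h : ℕ) < a).card = min a j := by
    rw [show min a j = (Finset.range (min a j)).card from (Finset.card_range _).symm]
    apply Finset.card_bij (fun (h : Fin j) _ => (h : ℕ))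
    · intro h hh
      simp only [Finset.mem_filter] at hh
      exact Finset.mem_range.mpr (by have := h.isLt; omega)
    · intro h1 h1m h2 h2m heq
      exact Fin.ext heq
    · intro i hi
      rw [Finset.mem_range] at hi
      exact ⟨⟨i, by omega⟩, Finset.mem_filter.mpr ⟨Finset.mem_univ _, by simpa using (by omega : i < a)⟩, rfl⟩
  have hUcard : U.card = m + min a j := by
    rw [hU, Finset.card_union_of_disjoint hdisj,
      Finset.card_image_of_injective _ hzvinj, hfiltcard]
  -- Fbig and P₀
  set P0 := (Finset.univ.filter fun h : Fin j => ¬ (h : ℕ) < a) with hP0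
  set Fbig := P0.image zv with hFbig
  have hP0card : P0.card = j - min a j := by
    have := Finset.card_filter_add_card_filter_not
      (s := (Finset.univ : Finset (Fin j))) (p := fun h : Fin j => (h : ℕ) < a)
    rw [hfiltcard] at this
    simp only [Finset.card_univ, Fintype.card_fin] at this
    rw [hP0]
    omega
  have hFbigU : ∀ z ∈ Fbig, z ∉ U := by
    intro z hz hzU
    rcases Finset.mem_image.mp hz with ⟨h, hh, rfl⟩
    simp only [hP0, Finset.mem_filter] at hh
    rcases Finset.mem_union.mp hzU with hzS | hzI
    · have := hS _ hzS
      rw [hzval] at this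
      omega
    · rcases Finset.mem_image.mp hzI with ⟨h', hh', heq⟩
      have : h' = h := hzvinj heq
      subst this
      simp only [Finset.mem_filter] at hh'
      exact hh.2 hh'.2
  set F := (Finset.univ.filter fun z => c z ≠ 0) \ U with hF
  have hFsub : F ⊆ Fbig := by
    intro z hz
    rw [hF, Finset.mem_sdiff, Finset.mem_filter] at hz
    obtain ⟨⟨_, hcz⟩, hzU⟩ := hz
    have hge : n - j ≤ (z : ℕ) := by
      by_contra hlt
      apply hcz
      rw [hc]
      simp only [if_neg hlt]
    set h : Fin j := ⟨(z : ℕ) - (n - j), by have := z.isLt; omega⟩ with hh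
    have hzeq : zv h = z := by
      apply Fin.ext
      rw [hzval]
      simp only [hh]
      omega
    have hha : ¬ (h : ℕ) < a := by
      intro hlt
      apply hzU
      rw [hU]
      apply Finset.mem_union_right
      exact Finset.mem_image.mpr ⟨h, Finset.mem_filter.mpr ⟨Finset.mem_univ _, hlt⟩, hzeq⟩
    rw [hFbig]
    exact Finset.mem_image.mpr ⟨h, Finset.mem_filter.mpr ⟨Finset.mem_univ _, hha⟩, hzeq⟩
  -- apply the master lemma
  rw [hmono]
  apply masterLemma s L (∑ z ∈ F, c z) c U d rfl
  intro Γ hΓ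
  -- translate Γ to Γ₀ ⊆ P0
  set Γ0 := (Finset.univ.filter fun h : Fin j => zv h ∈ Γ) with hΓ0
  have hΓeq : Γ0.image zv = Γ := by
    apply Finset.Subset.antisymm
    · intro z hz
      rcases Finset.mem_image.mp hz with ⟨h, hh, rfl⟩
      exact (Finset.mem_filter.mp hh).2
    · intro z hz
      have hzF : z ∈ Fbig := hFsub (hΓ hz)
      rcases Finset.mem_image.mp hzF with ⟨h, _, rfl⟩
      exact Finset.mem_image.mpr ⟨h, Finset.mem_filter.mpr ⟨Finset.mem_univ _, hz⟩, rfl⟩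
  have hΓcard : Γ.card = Γ0.card := by
    rw [← hΓeq, Finset.card_image_of_injective _ hzvinj]
  have hΓ0P0 : Γ0 ⊆ P0 := by
    intro h hh
    have hzΓ : zv h ∈ Γ := (Finset.mem_filter.mp hh).2
    have hzF : zv h ∈ Fbig := hFsub (hΓ hzΓ)
    rcases Finset.mem_image.mp hzF with ⟨h', hh', heq⟩
    have : h' = h := hzvinj heq
    subst this
    exact hh'
  -- sum translation
  have hsum1 : (∑ z ∈ F \ Γ, c z) = ∑ z ∈ Fbig \ Γ, c z := by
    apply Finset.sum_subset (Finset.sdiff_subset_sdiff hFsub (le_refl _))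
    intro z hz hznot
    rw [Finset.mem_sdiff] at hz hznot
    push_neg at hznot
    by_contra hcz
    have hzF : z ∈ F := by
      rw [hF, Finset.mem_sdiff, Finset.mem_filter]
      exact ⟨⟨Finset.mem_univ _, hcz⟩, hFbigU z hz.1⟩
    exact hz.2 (hznot hzF)
  have hsum2 : (∑ z ∈ Fbig \ Γ, c z) = ∑ h ∈ P0 \ Γ0, ts.getD (h : ℕ) 0 := by
    rw [hFbig, ← hΓeq, ← Finset.image_sdiff _ _ hzvinj]
    rw [Finset.sum_image (fun x _ y _ hxy => hzvinj hxy)]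
    exact Finset.sum_congr rfl fun h _ => hczv h
  -- cardinality of P0 \ Γ0
  have hPGcard : (P0 \ Γ0).card = j - min a j - Γ0.card := by
    rw [Finset.card_sdiff_of_subset hΓ0P0, hP0card]
  -- lower bound on the sum
  have hSt : (j - min a j - Γ0.card) * ts.getD a 0 ≤ ∑ h ∈ P0 \ Γ0, ts.getD (h : ℕ) 0 := by
    rcases Nat.lt_or_ge a j with haj | haj
    · calc (j - min a j - Γ0.card) * ts.getD a 0
          = (P0 \ Γ0).card • ts.getD a 0 := by rw [hPGcard, smul_eq_mul]
        _ ≤ ∑ h ∈ P0 \ Γ0, ts.getD (h : ℕ) 0 := by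
            apply Finset.card_nsmul_le_sum
            intro h hh
            have hhP0 : h ∈ P0 := (Finset.mem_sdiff.mp hh).1
            simp only [hP0, Finset.mem_filter] at hhP0
            exact sorted_getD_mono ts (Finset.pairwise_sort _ _) a (h : ℕ)
              (by omega) (by rw [htslen]; exact h.isLt)
    · have : j - min a j = 0 := by omega
      rw [this]
      simp
  -- conclude via arithMain
  have hmain := arithMain n j m d L hLsorted T hTcard hj hmn hd Γ0.card
    (∑ h ∈ P0 \ Γ0, ts.getD (h : ℕ) 0)
    (by
      have := Finset.card_le_card hΓ0P0
      rw [hP0card] at this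
      exact this)
    hSt
  rw [hUcard, hΓcard, hsum1, hsum2]
  exact hmain
end
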